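/- arXiv:1404.6624 — 10 statements merged into one kernel-verified Lean document; each statement's English description precedes it below -/
import Mathlib

section
/- Let θ ∈ ℂ be either a positive real number or θ = iβ with β ∈ (0,π), and let p ∈ ℝ. Suppose that for every integer k ≥ 0 there exists a function a_k : ℂ∖{0} → ℂ that is even-symmetric, i.e. z·a_k(z) = a_k(z⁻¹) for all z ≠ 0, and satisfies the reproduction conditions a_k(e^{−θ/2^{k+1}}) = 2·e^{−pθ/2^{k+1}} and a_k(e^{θ/2^{k+1}}) = 2·e^{pθ/2^{k+1}}. Then p = −1/2. -/
open Complex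

/-- If for every level `k` there is an even-symmetric `k`-level symbol satisfying the
conditions for reproduction of the pair `{e^{θx}, e^{-θx}}` with shift parameter `p`,
then `p = -1/2`. -/
theorem evenSymmetric_reproduction_shift_eq_neg_half (θ : ℂ) (p : ℝ)
    (hθ : (∃ t : ℝ, 0 < t ∧ θ = (t : ℂ)) ∨
          (∃ β : ℝ, 0 < β ∧ β < Real.pi ∧ θ = (β : ℂ) * I))
    (h : ∀ k : ℕ, ∃ a : ℂ → ℂ,
      (∀ z : ℂ, z ≠ 0 → z * a z = a z⁻¹) ∧
      a (exp (-θ / 2 ^ (k + 1))) = 2 * exp (-(p : ℂ) * θ / 2 ^ (k + 1)) ∧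
      a (exp (θ / 2 ^ (k + 1))) = 2 * exp ((p : ℂ) * θ / 2 ^ (k + 1))) :
    p = -(1 / 2) := by
  have key : ∀ k : ℕ, ∃ n : ℤ,
      (2 * (p : ℂ) + 1) * θ = (n : ℂ) * (2 * (Real.pi : ℂ) * I) * 2 ^ (k + 1) := by
    intro k
    obtain ⟨a, hs, h1, h2⟩ := h k
    have hz : exp (-θ / 2 ^ (k + 1)) ≠ 0 := Complex.exp_ne_zero _
    have hinv : (exp (-θ / 2 ^ (k + 1)))⁻¹ = exp (θ / 2 ^ (k + 1)) := by
      rw [← Complex.exp_neg]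
      ring_nf
    have E := hs _ hz
    rw [hinv, h1, h2] at E
    have E2 : exp (-θ / 2 ^ (k + 1) + -(p : ℂ) * θ / 2 ^ (k + 1)) =
        exp ((p : ℂ) * θ / 2 ^ (k + 1)) := by
      rw [Complex.exp_add]
      have h2' : (2 : ℂ) * (exp (-θ / 2 ^ (k + 1)) * exp (-(p : ℂ) * θ / 2 ^ (k + 1))) =
          2 * exp ((p : ℂ) * θ / 2 ^ (k + 1)) := by linear_combination E
      exact mul_left_cancel₀ two_ne_zero h2'
    rw [Complex.exp_eq_exp_iff_exists_int] at E2
    obtain ⟨n, hn⟩ := E2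
    refine ⟨-n, ?_⟩
    have hc : (2 : ℂ) ^ (k + 1) ≠ 0 := pow_ne_zero _ two_ne_zero
    have hgoal : (2 * (p : ℂ) + 1) * θ * (2 ^ (k + 1) * 2 ^ (k + 1)) =
        ((-n : ℤ) : ℂ) * (2 * (Real.pi : ℂ) * I) * 2 ^ (k + 1) *
          (2 ^ (k + 1) * 2 ^ (k + 1)) := by
      field_simp at hn
      push_cast
      linear_combination (-(2 ^ (k + 1) * 2 ^ (k + 1)) : ℂ) * hn
    exact mul_right_cancel₀ (mul_ne_zero hc hc) hgoal
  rcases hθ with ⟨t, ht, rfl⟩ | ⟨β, hβ0, hβπ, rfl⟩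
  · obtain ⟨n, hn⟩ := key 0
    have hre := congrArg Complex.re hn
    simp [Complex.mul_re, Complex.mul_im] at hre
    rcases hre with h' | h'
    · linarith
    · linarith
  · by_contra hp
    have hne : 2 * p + 1 ≠ 0 := fun h' => hp (by linarith)
    obtain ⟨k, hk⟩ := pow_unbounded_of_one_lt (|2 * p + 1| * β / (2 * Real.pi)) one_lt_two
    obtain ⟨n, hn⟩ := key k
    have him := congrArg Complex.im hn
    simp [Complex.mul_im, Complex.mul_re] at him
    rw [show ((2:ℂ) ^ (k + 1)).re = (2:ℝ) ^ (k + 1) by rw [show (2:ℂ) = ((2:ℝ):ℂ) by norm_num, ← Complex.ofReal_pow, Complex.ofReal_re]] at him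
    have hπ := Real.pi_pos
    have hpow : (0:ℝ) < 2 ^ (k + 1) := by positivity
    have hk' : |2 * p + 1| * β < 2 * Real.pi * 2 ^ (k + 1) := by
      rw [div_lt_iff₀ (by positivity)] at hk
      have h2 : (2:ℝ) ^ (k + 1) = 2 * 2 ^ k := by ring
      nlinarith [pow_pos (by norm_num : (0:ℝ) < 2) k]
    have hn0 : n = 0 := by
      by_contra hn0
      have h1 : (1:ℝ) ≤ |(n:ℝ)| := by exact_mod_cast Int.one_le_abs hn0
      have habs : |2 * p + 1| * β = |(n:ℝ)| * (2 * Real.pi * 2 ^ (k + 1)) := by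
        have := congrArg (fun x : ℝ => |x|) him
        rwa [abs_mul, abs_of_pos hβ0, abs_mul, abs_mul, abs_of_pos hpow,
          abs_of_pos (by positivity : (0:ℝ) < 2 * Real.pi), mul_assoc] at this
      nlinarith [mul_le_mul_of_nonneg_right h1
        (by positivity : (0:ℝ) ≤ 2 * Real.pi * 2 ^ (k + 1))]
    subst hn0
    norm_num at him
    rcases him with h' | h'
    · exact hne h'
    · linarith
end

section
/- Let k ≥ 0 and d ≥ 1 be integers, and let θ ∈ ℂ be either a positive real number or θ = iβ with β ∈ [0,π). Let a be a Laurent polynomial over ℝ that is even-symmetric, i.e. z·a(z) = a(z⁻¹) for all z ≠ 0, and define b(z) := z·a(z²) − 2. Then the following are equivalent: (i) for every r with 0 ≤ r ≤ d−1, the r-th complex derivative of a at w := e^{−θ/2^{k+1}} equals 2·e^{(1/2+r)θ/2^{k+1}}·∏_{i=0}^{r−1}(−1/2 − i); (ii) for every r with 0 ≤ r ≤ d−1, the r-th complex derivative of b at e^{−θ/2^{k+2}} equals 0. -/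
open Complex Finset Polynomial

/-- Iterated derivative of a Laurent-type sum plus a constant, at nonzero points. -/
private lemma laurent_iteratedDeriv (s : Finset ℤ) (c : ℤ → ℂ) (e : ℤ → ℤ) (K : ℂ)
    (f : ℂ → ℂ) (hf : ∀ z : ℂ, z ≠ 0 → f z = (∑ j ∈ s, c j * z ^ (e j)) + K) :
    ∀ (r : ℕ) (z : ℂ), z ≠ 0 →
      iteratedDeriv r f z
        = (∑ j ∈ s, c j * (∏ i ∈ range r, ((e j : ℂ) - (i : ℂ))) * z ^ (e j - (r : ℤ)))
          + (if r = 0 then K else 0) := by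
  intro r
  induction r with
  | zero =>
    intro z hz
    simp [iteratedDeriv_zero, hf z hz]
  | succ r ih =>
    intro z hz
    rw [iteratedDeriv_succ]
    have hev : iteratedDeriv r f =ᶠ[nhds z]
        (fun y => (∑ j ∈ s, c j * (∏ i ∈ range r, ((e j : ℂ) - (i : ℂ))) * y ^ (e j - (r : ℤ)))
          + (if r = 0 then K else 0)) := by
      filter_upwards [eventually_ne_nhds hz] with y hy using ih y hy
    rw [hev.deriv_eq]
    have hD : HasDerivAt
        (fun y : ℂ => (∑ j ∈ s, c j * (∏ i ∈ range r, ((e j : ℂ) - (i : ℂ))) * y ^ (e j - (r : ℤ)))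
          + (if r = 0 then K else 0))
        (∑ j ∈ s, (c j * (∏ i ∈ range r, ((e j : ℂ) - (i : ℂ)))) *
            (((e j - (r : ℤ) : ℤ) : ℂ) * z ^ (e j - (r : ℤ) - 1))) z := by
      apply HasDerivAt.add_const
      exact HasDerivAt.fun_sum fun j _ => (hasDerivAt_zpow (e j - r) z (Or.inl hz)).const_mul _
    rw [hD.deriv, if_neg (Nat.succ_ne_zero r), add_zero]
    refine Finset.sum_congr rfl fun j _ => ?_
    have hexp : e j - (r : ℤ) - 1 = e j - ((r + 1 : ℕ) : ℤ) := by push_cast; ring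
    rw [prod_range_succ, hexp]
    push_cast
    ring


/-- If a linear functional vanishes on a family of polynomials of exact degrees `0,…,d-1`,
it vanishes on all polynomials of degree `< d`. -/
private lemma key_span (L : Polynomial ℂ →ₗ[ℂ] ℂ) (d : ℕ) (q : ℕ → Polynomial ℂ)
    (hq0 : ∀ r, q r ≠ 0) (hdeg : ∀ r, (q r).natDegree = r)
    (hL : ∀ r < d, L (q r) = 0) :
    ∀ p : Polynomial ℂ, p.natDegree < d → L p = 0 := by
  have H : ∀ n, ∀ p : Polynomial ℂ, p.natDegree ≤ n → p.natDegree < d → L p = 0 := by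
    intro n
    induction n with
    | zero =>
      intro p hp hpd
      obtain ⟨cp, rfl⟩ := Polynomial.natDegree_eq_zero.mp (Nat.le_zero.mp hp)
      obtain ⟨c0, hc0⟩ := Polynomial.natDegree_eq_zero.mp (hdeg 0)
      have hc0ne : c0 ≠ 0 := by
        intro h; exact hq0 0 (by rw [← hc0, h, map_zero])
      have hrw : Polynomial.C cp = (cp / c0) • q 0 := by
        rw [← hc0, Polynomial.smul_C]; congr 1; rw [smul_eq_mul, div_mul_cancel₀ _ hc0ne]
      rw [hrw, map_smul, hL 0 (by simpa using hpd), smul_zero]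
    | succ n ih =>
      intro p hp hpd
      rcases le_or_gt p.natDegree n with h | h
      · exact ih p h hpd
      · have hdp : p.natDegree = n + 1 := le_antisymm hp h
        have hp0 : p ≠ 0 := fun h0 => by simp [h0] at hdp
        have hqlead : (q (n + 1)).leadingCoeff ≠ 0 :=
          Polynomial.leadingCoeff_ne_zero.mpr (hq0 _)
        set cc := p.leadingCoeff / (q (n + 1)).leadingCoeff with hcc
        have hccne : cc ≠ 0 := div_ne_zero (Polynomial.leadingCoeff_ne_zero.mpr hp0) hqlead
        have hdeg' : (Polynomial.C cc * q (n + 1)).degree = p.degree := by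
          rw [Polynomial.degree_C_mul hccne, Polynomial.degree_eq_natDegree hp0,
            Polynomial.degree_eq_natDegree (hq0 _), hdeg, hdp]
        have hlead' : (Polynomial.C cc * q (n + 1)).leadingCoeff = p.leadingCoeff := by
          rw [Polynomial.leadingCoeff_mul, Polynomial.leadingCoeff_C, hcc,
            div_mul_cancel₀ _ hqlead]
        have hsub : (p - Polynomial.C cc * q (n + 1)).degree < p.degree :=
          Polynomial.degree_sub_lt hdeg'.symm hp0 hlead'.symm
        have hsub' : (p - Polynomial.C cc * q (n + 1)).natDegree ≤ n := by
          by_cases hz : p - Polynomial.C cc * q (n + 1) = 0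
          · simp [hz]
          · have := Polynomial.natDegree_lt_natDegree hz (by rw [← hdp] at hsub ⊢; exact hsub)
            omega
        have hLp : L p = L (p - Polynomial.C cc * q (n + 1)) + cc * L (q (n + 1)) := by
          have : p = (p - Polynomial.C cc * q (n + 1)) + cc • q (n + 1) := by
            rw [Polynomial.smul_eq_C_mul]; ring
          calc L p = L ((p - Polynomial.C cc * q (n + 1)) + cc • q (n + 1)) := by rw [← this]
          _ = _ := by rw [map_add, map_smul, smul_eq_mul]
        rw [hLp, hL (n + 1) (by omega), ih _ hsub' (by omega)]
        ring
  exact fun p hpd => H p.natDegree p le_rfl hpd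


/-- For an even-symmetric real Laurent polynomial `a`, the reproduction conditions
(with shift `p = -1/2`) at `w = e^{-θ/2^{k+1}}` up to order `d-1` hold if and only if the
associated odd-symmetric Laurent polynomial `b(z) = z·a(z²) - 2` and all its derivatives
up to order `d-1` vanish at `e^{-θ/2^{k+2}}`. -/
theorem evenSymmetric_reproduction_iff_assoc_vanish (k d : ℕ) (hd : 1 ≤ d) (θ : ℂ)
    (hθ : (∃ t : ℝ, 0 < t ∧ θ = (t : ℂ)) ∨
          (∃ β : ℝ, 0 ≤ β ∧ β < Real.pi ∧ θ = (β : ℂ) * I))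
    (a : ℂ → ℂ)
    (ha : ∃ (c : ℤ → ℝ) (s : Finset ℤ), ∀ z : ℂ, z ≠ 0 → a z = ∑ j ∈ s, (c j : ℂ) * z ^ j)
    (hsym : ∀ z : ℂ, z ≠ 0 → z * a z = a z⁻¹) :
    (∀ r < d, iteratedDeriv r a (exp (-θ / 2 ^ (k + 1))) =
        2 * exp ((1 / 2 + (r : ℂ)) * θ / 2 ^ (k + 1)) *
          ∏ i ∈ range r, (-(1 / 2) - (i : ℂ))) ↔
    (∀ r < d, iteratedDeriv r (fun z : ℂ => z * a (z ^ 2) - 2) (exp (-θ / 2 ^ (k + 2))) = 0) := by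
  obtain ⟨c, s, hc⟩ := ha
  set w0 : ℂ := exp (-θ / 2 ^ (k + 2)) with hw0def
  have hw0 : w0 ≠ 0 := exp_ne_zero _
  have h2ne1 : (2 : ℂ) ^ (k + 1) ≠ 0 := pow_ne_zero _ two_ne_zero
  have h2ne2 : (2 : ℂ) ^ (k + 2) ≠ 0 := pow_ne_zero _ two_ne_zero
  have hwsq : exp (-θ / 2 ^ (k + 1)) = w0 * w0 := by
    rw [hw0def, ← exp_add]
    congr 1
    field_simp
    ring
  -- the modified coefficients
  set x : ℤ → ℂ := fun j => (c j : ℂ) * w0 ^ (2 * j + 1) with hxdef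
  -- the linear functional
  set L : Polynomial ℂ →ₗ[ℂ] ℂ :=
    (∑ j ∈ s, x j • Polynomial.leval ((j : ℤ) : ℂ)) - (2 : ℂ) • Polynomial.leval (-(1/2) : ℂ)
    with hLdef
  have hLapp : ∀ p : Polynomial ℂ,
      L p = (∑ j ∈ s, x j * p.eval ((j : ℤ) : ℂ)) - 2 * p.eval (-(1/2)) := by
    intro p
    simp [hLdef, Polynomial.leval_apply, LinearMap.sub_apply, LinearMap.sum_apply,
      LinearMap.smul_apply, smul_eq_mul]
  -- the two polynomial families
  set q1 : ℕ → Polynomial ℂ := fun r => ∏ i ∈ range r, (X - C ((i : ℕ) : ℂ)) with hq1def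
  set q2 : ℕ → Polynomial ℂ := fun r => ∏ i ∈ range r, (C 2 * X + C (1 - ((i : ℕ) : ℂ)))
    with hq2def
  have hq1eval : ∀ (r : ℕ) (t : ℂ), (q1 r).eval t = ∏ i ∈ range r, (t - (i : ℂ)) := by
    intro r t; simp [hq1def, eval_prod]
  have hq2eval : ∀ (r : ℕ) (t : ℂ), (q2 r).eval t = ∏ i ∈ range r, (2 * t + (1 - (i : ℂ))) := by
    intro r t; simp [hq2def, eval_prod]
  have hq1monic : ∀ r, (q1 r).Monic := fun r =>
    monic_prod_of_monic _ _ fun i _ => monic_X_sub_C _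
  have hq1ne : ∀ r, q1 r ≠ 0 := fun r => (hq1monic r).ne_zero
  have hq1deg : ∀ r, (q1 r).natDegree = r := by
    intro r
    rw [hq1def]
    rw [Polynomial.natDegree_prod _ _ fun i _ => Polynomial.X_sub_C_ne_zero _,
      Finset.sum_congr rfl fun i _ => Polynomial.natDegree_X_sub_C ((i : ℕ) : ℂ)]
    simp
  have hq2fne : ∀ i : ℕ, (C (2:ℂ) * X + C (1 - (i : ℂ))) ≠ 0 := by
    intro i h
    have := Polynomial.natDegree_linear (two_ne_zero (α := ℂ)) (b := 1 - (i:ℂ))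
    rw [h] at this
    simp at this
  have hq2ne : ∀ r, q2 r ≠ 0 := by
    intro r
    rw [hq2def]
    exact Finset.prod_ne_zero_iff.mpr fun i _ => hq2fne i
  have hq2deg : ∀ r, (q2 r).natDegree = r := by
    intro r
    rw [hq2def, Polynomial.natDegree_prod _ _ fun i _ => hq2fne i,
      Finset.sum_congr rfl fun i _ => Polynomial.natDegree_linear (two_ne_zero (α := ℂ))]
    simp
  have hprodneg : ∀ r : ℕ,
      (∏ i ∈ range r, (2 * (-(1/2):ℂ) + (1 - (i : ℂ)))) = if r = 0 then 1 else 0 := by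
    intro r
    cases r with
    | zero => simp
    | succ n =>
      rw [if_neg (Nat.succ_ne_zero n)]
      apply Finset.prod_eq_zero (Finset.mem_range.mpr (Nat.succ_pos n))
      norm_num
  -- derivative formula for a
  have hA : ∀ r : ℕ, iteratedDeriv r a (exp (-θ / 2 ^ (k + 1)))
      = ∑ j ∈ s, (c j : ℂ) * (∏ i ∈ range r, (((j : ℤ) : ℂ) - (i : ℂ)))
          * (exp (-θ / 2 ^ (k + 1))) ^ ((j : ℤ) - (r : ℤ)) := by
    intro r
    have := laurent_iteratedDeriv s (fun j => (c j : ℂ)) id 0 a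
      (fun z hz => by rw [hc z hz]; simp) r (exp (-θ / 2 ^ (k + 1))) (exp_ne_zero _)
    simpa using this
  -- derivative formula for b
  have hzpow : ∀ (z : ℂ), z ≠ 0 → ∀ j : ℤ, z * (z ^ 2) ^ j = z ^ (2 * j + 1) := by
    intro z hz j
    have h : (2 * j + 1 : ℤ) = 1 + (j + j) := by ring
    rw [sq, mul_zpow, h, zpow_add₀ hz, zpow_add₀ hz, zpow_one]
  have hB : ∀ r : ℕ, iteratedDeriv r (fun z : ℂ => z * a (z ^ 2) - 2) w0
      = (∑ j ∈ s, (c j : ℂ) * (∏ i ∈ range r, (((2 * j + 1 : ℤ) : ℂ) - (i : ℂ)))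
          * w0 ^ ((2 * j + 1 : ℤ) - (r : ℤ))) + (if r = 0 then (-2 : ℂ) else 0) := by
    intro r
    refine laurent_iteratedDeriv s (fun j => (c j : ℂ)) (fun j => 2 * j + 1) (-2)
      _ (fun z hz => ?_) r w0 hw0
    have hz2 : (z ^ 2 : ℂ) ≠ 0 := pow_ne_zero _ hz
    rw [hc _ hz2, Finset.mul_sum, sub_eq_add_neg]
    congr 1
    refine Finset.sum_congr rfl fun j _ => ?_
    rw [mul_comm z ((c j : ℂ) * (z ^ 2) ^ (j : ℤ)), mul_assoc, mul_comm ((z^2 : ℂ) ^ (j:ℤ)) z,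
      hzpow z hz j]
  -- equivalence for condition (i)
  have h1 : ∀ r : ℕ,
      (iteratedDeriv r a (exp (-θ / 2 ^ (k + 1))) =
        2 * exp ((1 / 2 + (r : ℂ)) * θ / 2 ^ (k + 1)) *
          ∏ i ∈ range r, (-(1 / 2) - (i : ℂ))) ↔ L (q1 r) = 0 := by
    intro r
    set W : ℂ := w0 ^ (2 * (r : ℤ) + 1) with hWdef
    have hWne : W ≠ 0 := zpow_ne_zero _ hw0
    have key1 : ∀ j : ℤ, (exp (-θ / 2 ^ (k + 1))) ^ ((j : ℤ) - (r : ℤ)) * W = w0 ^ (2 * j + 1) := by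
      intro j
      rw [hwsq, hWdef, mul_zpow, ← zpow_add₀ hw0, ← zpow_add₀ hw0]
      congr 1
      ring
    have key2 : exp ((1 / 2 + (r : ℂ)) * θ / 2 ^ (k + 1)) * W = 1 := by
      rw [hWdef, hw0def, ← Complex.exp_int_mul, ← exp_add, ← Complex.exp_zero]
      congr 1
      push_cast
      field_simp
      simp only [Complex.exp_zero]
      ring
    rw [hA r, ← (mul_left_injective₀ hWne).eq_iff, Finset.sum_mul]
    have hl : ∀ j ∈ s, ((c j : ℂ) * (∏ i ∈ range r, (((j : ℤ) : ℂ) - (i : ℂ)))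
          * (exp (-θ / 2 ^ (k + 1))) ^ ((j : ℤ) - (r : ℤ))) * W
        = x j * (q1 r).eval ((j : ℤ) : ℂ) := by
      intro j _
      rw [mul_assoc, key1 j, hq1eval, hxdef]
      ring
    rw [Finset.sum_congr rfl hl]
    have hr : (2 * exp ((1 / 2 + (r : ℂ)) * θ / 2 ^ (k + 1)) *
          ∏ i ∈ range r, (-(1 / 2) - (i : ℂ))) * W = 2 * (q1 r).eval (-(1/2)) := by
      rw [hq1eval]
      calc (2 * exp ((1 / 2 + (r : ℂ)) * θ / 2 ^ (k + 1)) * ∏ i ∈ range r, (-(1 / 2) - (i : ℂ))) * W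
          = 2 * (∏ i ∈ range r, (-(1 / 2) - (i : ℂ))) *
            (exp ((1 / 2 + (r : ℂ)) * θ / 2 ^ (k + 1)) * W) := by ring
        _ = _ := by rw [key2]; ring
    rw [hr, hLapp, sub_eq_zero]
  -- equivalence for condition (ii)
  have h2 : ∀ r : ℕ,
      (iteratedDeriv r (fun z : ℂ => z * a (z ^ 2) - 2) w0 = 0) ↔ L (q2 r) = 0 := by
    intro r
    set W : ℂ := w0 ^ (r : ℤ) with hWdef
    have hWne : W ≠ 0 := zpow_ne_zero _ hw0
    have hmul : (((∑ j ∈ s, (c j : ℂ) * (∏ i ∈ range r, (((2 * j + 1 : ℤ) : ℂ) - (i : ℂ)))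
          * w0 ^ ((2 * j + 1 : ℤ) - (r : ℤ))) + (if r = 0 then (-2 : ℂ) else 0))) * W
        = L (q2 r) := by
      rw [add_mul, Finset.sum_mul, hLapp]
      have hl : ∀ j ∈ s, ((c j : ℂ) * (∏ i ∈ range r, (((2 * j + 1 : ℤ) : ℂ) - (i : ℂ)))
            * w0 ^ ((2 * j + 1 : ℤ) - (r : ℤ))) * W = x j * (q2 r).eval ((j : ℤ) : ℂ) := by
        intro j _
        have hw : w0 ^ ((2 * j + 1 : ℤ) - (r : ℤ)) * W = w0 ^ (2 * j + 1) := by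
          rw [hWdef, ← zpow_add₀ hw0]; congr 1; ring
        have hp : (∏ i ∈ range r, (((2 * j + 1 : ℤ) : ℂ) - (i : ℂ)))
            = (q2 r).eval ((j : ℤ) : ℂ) := by
          rw [hq2eval]
          refine Finset.prod_congr rfl fun i _ => ?_
          push_cast
          ring
        rw [mul_assoc, hw, hp, hxdef]
        ring
      rw [Finset.sum_congr rfl hl]
      congr 1
      rw [hq2eval, hprodneg r]
      rcases Nat.eq_zero_or_pos r with h | h
      · simp [h, hWdef, sub_eq_add_neg]
      · rw [if_neg (Nat.pos_iff_ne_zero.mp h), if_neg (Nat.pos_iff_ne_zero.mp h)]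
        ring
    rw [hB r, ← hmul, mul_eq_zero]
    simp [hWne]
  -- conclusion
  constructor
  · intro hyp r hr
    rw [h2 r]
    exact key_span L d q1 hq1ne hq1deg (fun r' hr' => (h1 r').mp (hyp r' hr')) (q2 r)
      (by rw [hq2deg]; exact hr)
  · intro hyp r hr
    rw [h1 r]
    exact key_span L d q2 hq2ne hq2deg (fun r' hr' => (h2 r').mp (hyp r' hr')) (q1 r)
      (by rw [hq1deg]; exact hr)
end

section
/- Let k ≥ 0 and d ≥ 1 be integers, let θ ∈ ℂ be either a positive real number or θ = iβ with β ∈ [0,π), and set w := e^{−θ/2^{k+1}}. Let a be a Laurent polynomial over ℝ that is even-symmetric, i.e. z·a(z) = a(z⁻¹) for all z ≠ 0. Then [for every r with 0 ≤ r ≤ d−1, the r-th complex derivative of a at w equals 2·e^{(1/2+r)θ/2^{k+1}}·∏_{i=0}^{r−1}(−1/2 − i)] if and only if [for every r with 0 ≤ r ≤ d−1, the r-th complex derivative of a at w⁻¹ equals 2·e^{−(1/2+r)θ/2^{k+1}}·∏_{i=0}^{r−1}(−1/2 − i)]. (These are the exponential-polynomial reproduction conditions with shift parameter p = −1/2 at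 w and at w⁻¹, respectively.) -/
open Complex Finset Polynomial

/-- The falling-factorial polynomial `∏_{i<r} (X - i)`. -/
noncomputable def Pfall (r : ℕ) : Polynomial ℂ := ∏ i ∈ range r, (X - C (i : ℂ))

lemma Pfall_monic (r : ℕ) : (Pfall r).Monic :=
  monic_prod_of_monic _ _ fun i _ => monic_X_sub_C _

lemma Pfall_natDegree (r : ℕ) : (Pfall r).natDegree = r := by
  rw [Pfall, natDegree_prod _ _ fun i _ => X_sub_C_ne_zero _]
  simp only [natDegree_X_sub_C, Finset.sum_const, smul_eq_mul, mul_one, card_range]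

lemma Pfall_eval (r : ℕ) (x : ℂ) : (Pfall r).eval x = ∏ i ∈ range r, (x - (i : ℂ)) := by
  simp [Pfall, eval_prod]

/-- If a linear functional kills all falling factorials of degree `< d`, it kills
all polynomials of degree `< d`. -/
lemma span_aux (d : ℕ) (Φ : Polynomial ℂ → ℂ)
    (hadd : ∀ Q R, Φ (Q + R) = Φ Q + Φ R)
    (hsmul : ∀ (t : ℂ) (Q), Φ (C t * Q) = t * Φ Q)
    (h : ∀ r < d, Φ (Pfall r) = 0) :
    ∀ n, n < d → ∀ Q : Polynomial ℂ, Q.natDegree ≤ n → Φ Q = 0 := by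
  intro n
  induction n with
  | zero =>
    intro hd Q hQ
    rw [Polynomial.eq_C_of_natDegree_le_zero hQ,
      show (C (Q.coeff 0) : Polynomial ℂ) = C (Q.coeff 0) * Pfall 0 by simp [Pfall],
      hsmul, h 0 hd, mul_zero]
  | succ n ih =>
    intro hd Q hQ
    set t := Q.coeff (n + 1) with ht
    have hR : (Q - C t * Pfall (n + 1)).natDegree ≤ n := by
      rw [natDegree_le_iff_coeff_eq_zero]
      intro N hN
      rw [coeff_sub, coeff_C_mul]
      rcases eq_or_lt_of_le (Nat.succ_le_of_lt hN) with hEq | hLt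
      · have h1 : (Pfall (n + 1)).coeff N = 1 := by
          rw [← hEq]
          have := (Pfall_monic (n + 1)).coeff_natDegree
          rwa [Pfall_natDegree] at this
        rw [h1, mul_one, ← hEq, ← ht, sub_self]
      · have h1 : Q.coeff N = 0 :=
          coeff_eq_zero_of_natDegree_lt (lt_of_le_of_lt hQ hLt)
        have h2 : (Pfall (n + 1)).coeff N = 0 :=
          coeff_eq_zero_of_natDegree_lt (by rw [Pfall_natDegree]; exact hLt)
        rw [h1, h2, mul_zero, sub_self]
    have hsplit : Q = (Q - C t * Pfall (n + 1)) + C t * Pfall (n + 1) := by ring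
    rw [hsplit, hadd, hsmul, ih (Nat.lt_of_succ_lt hd) _ hR, h (n + 1) hd, mul_zero, add_zero]

/-- Iterated derivative of a Laurent polynomial. -/
lemma laurent_iter (a : ℂ → ℂ) (c : ℤ → ℝ) (s : Finset ℤ)
    (ha : ∀ z : ℂ, z ≠ 0 → a z = ∑ j ∈ s, (c j : ℂ) * z ^ j) :
    ∀ (r : ℕ) (w : ℂ), w ≠ 0 →
      iteratedDeriv r a w
        = ∑ j ∈ s, (c j : ℂ) * (∏ i ∈ range r, ((j : ℂ) - (i : ℂ))) * w ^ (j - (r : ℤ)) := by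
  intro r
  induction r with
  | zero =>
    intro w hw
    simp [iteratedDeriv_zero, ha w hw, prod_range_zero]
  | succ r ih =>
    intro w hw
    rw [iteratedDeriv_succ]
    have hev : iteratedDeriv r a =ᶠ[nhds w]
        fun z => ∑ j ∈ s, (c j : ℂ) * (∏ i ∈ range r, ((j : ℂ) - (i : ℂ))) * z ^ (j - (r : ℤ)) := by
      have hmem : ∀ᶠ z in nhds w, z ∈ ({0}ᶜ : Set ℂ) :=
        isOpen_compl_singleton.eventually_mem (by simpa using hw)
      filter_upwards [hmem] with z hz
      exact ih z hz
    rw [hev.deriv_eq]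
    have hder : HasDerivAt
        (fun z : ℂ => ∑ j ∈ s, (c j : ℂ) * (∏ i ∈ range r, ((j : ℂ) - (i : ℂ))) * z ^ (j - (r : ℤ)))
        (∑ j ∈ s, (c j : ℂ) * (∏ i ∈ range r, ((j : ℂ) - (i : ℂ)))
          * ((Int.cast (j - (r : ℤ)) : ℂ) * w ^ (j - (r : ℤ) - 1))) w := by
      apply HasDerivAt.fun_sum
      intro j hj
      exact (hasDerivAt_zpow (j - (r : ℤ)) w (Or.inl hw)).const_mul _
    rw [hder.deriv]
    refine Finset.sum_congr rfl fun j hj => ?_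
    rw [prod_range_succ,
      show j - (r : ℤ) - 1 = j - ((r : ℕ) + 1 : ℕ) by push_cast; ring]
    push_cast
    ring

/-- For an even-symmetric real Laurent polynomial `a`, the exponential-polynomial
reproduction conditions with shift parameter `p = -1/2` up to order `d-1` hold at
`w = e^{-θ/2^{k+1}}` if and only if they hold at `w⁻¹`. -/
theorem evenSymmetric_reproduction_iff_at_inv (k d : ℕ) (hd : 1 ≤ d) (θ : ℂ)
    (hθ : (∃ t : ℝ, 0 < t ∧ θ = (t : ℂ)) ∨
          (∃ β : ℝ, 0 ≤ β ∧ β < Real.pi ∧ θ = (β : ℂ) * I))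
    (a : ℂ → ℂ)
    (ha : ∃ (c : ℤ → ℝ) (s : Finset ℤ), ∀ z : ℂ, z ≠ 0 → a z = ∑ j ∈ s, (c j : ℂ) * z ^ j)
    (hsym : ∀ z : ℂ, z ≠ 0 → z * a z = a z⁻¹) :
    (∀ r < d, iteratedDeriv r a (exp (-θ / 2 ^ (k + 1))) =
        2 * exp ((1 / 2 + (r : ℂ)) * θ / 2 ^ (k + 1)) *
          ∏ i ∈ range r, (-(1 / 2) - (i : ℂ))) ↔
    (∀ r < d, iteratedDeriv r a (exp (-θ / 2 ^ (k + 1)))⁻¹ =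
        2 * exp (-(1 / 2 + (r : ℂ)) * θ / 2 ^ (k + 1)) *
          ∏ i ∈ range r, (-(1 / 2) - (i : ℂ))) := by
  obtain ⟨c, s, hc⟩ := ha
  set τ : ℂ := θ / 2 ^ (k + 1) with hτ
  set w : ℂ := exp (-τ) with hwdef
  have hw0 : w ≠ 0 := Complex.exp_ne_zero _
  have hwthm : exp (-θ / 2 ^ (k + 1)) = w := by rw [hwdef, hτ, neg_div]
  rw [hwthm]
  -- second Laurent representation of `a`
  set emb : ℤ ↪ ℤ := ⟨fun j => -1 - j, fun x y h => by dsimp at h; omega⟩ with hemb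
  set c' : ℤ → ℝ := fun j => c (-1 - j) with hcpdef
  have hc' : ∀ z : ℂ, z ≠ 0 → a z = ∑ j ∈ s.map emb, (c' j : ℂ) * z ^ j := by
    intro z hz
    have h1 : z⁻¹ * a z⁻¹ = a z := by
      have := hsym z⁻¹ (inv_ne_zero hz)
      rwa [inv_inv] at this
    rw [← h1, hc z⁻¹ (inv_ne_zero hz), Finset.mul_sum, Finset.sum_map]
    refine Finset.sum_congr rfl fun j hj => ?_
    show z⁻¹ * ((c j : ℂ) * z⁻¹ ^ (j : ℤ)) = (c (-1 - (-1 - j)) : ℂ) * z ^ (-1 - j : ℤ)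
    rw [show (-1 : ℤ) - (-1 - j) = j by ring]
    rw [show (z⁻¹ : ℂ) ^ (j : ℤ) = z ^ (-j : ℤ) by rw [inv_zpow, ← zpow_neg],
      show (z⁻¹ : ℂ) = z ^ (-1 : ℤ) by simp,
      show ((-1 : ℤ) - j) = -1 + -j by ring, zpow_add₀ hz]
    ring
  -- derivative formulas
  have hD : ∀ r : ℕ, iteratedDeriv r a w
      = ∑ j ∈ s, (c j : ℂ) * (∏ i ∈ range r, ((j : ℂ) - (i : ℂ))) * w ^ (j - (r : ℤ)) :=
    fun r => laurent_iter a c s hc r w hw0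
  have hD' : ∀ r : ℕ, iteratedDeriv r a w⁻¹
      = ∑ j ∈ s.map emb, (c' j : ℂ) * (∏ i ∈ range r, ((j : ℂ) - (i : ℂ)))
          * (w⁻¹) ^ (j - (r : ℤ)) :=
    fun r => laurent_iter a c' (s.map emb) hc' r w⁻¹ (inv_ne_zero hw0)
  -- the functional
  set Φ : Polynomial ℂ → ℂ := fun Q =>
    (∑ j ∈ s, (c j : ℂ) * Q.eval ((j : ℤ) : ℂ) * w ^ (j : ℤ))
      - 2 * exp (τ / 2) * Q.eval (-(1 / 2)) with hPhidef
  have hΦadd : ∀ Q R, Φ (Q + R) = Φ Q + Φ R := by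
    intro Q R
    simp only [hPhidef, eval_add, mul_add, add_mul, Finset.sum_add_distrib]
    ring
  have hΦsmul : ∀ (t : ℂ) (Q), Φ (C t * Q) = t * Φ Q := by
    intro t Q
    simp only [hPhidef, eval_mul, eval_C]
    rw [mul_sub, Finset.mul_sum]
    congr 1
    · exact Finset.sum_congr rfl fun j hj => by ring
    · ring
  have hq : (C (-1 : ℂ) - X).natDegree = 1 := by
    rw [show (C (-1 : ℂ) - X) = -(X - C (-1)) by ring, natDegree_neg, natDegree_X_sub_C]
  have hqq : (C (-1 : ℂ) - X).comp (C (-1 : ℂ) - X) = X := by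
    rw [sub_comp, C_comp, X_comp]; ring
  -- key equivalence at w
  have keyw : ∀ r : ℕ,
      (iteratedDeriv r a w = 2 * exp ((1 / 2 + (r : ℂ)) * θ / 2 ^ (k + 1)) *
          ∏ i ∈ range r, (-(1 / 2) - (i : ℂ))) ↔ Φ (Pfall r) = 0 := by
    intro r
    have hexp : 2 * exp ((1 / 2 + (r : ℂ)) * θ / 2 ^ (k + 1)) *
        (∏ i ∈ range r, (-(1 / 2) - (i : ℂ))) * w ^ (r : ℤ)
        = 2 * exp (τ / 2) * (Pfall r).eval (-(1 / 2)) := by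
      rw [Pfall_eval, hwdef, ← Complex.exp_int_mul]
      rw [show 2 * exp ((1 / 2 + (r : ℂ)) * θ / 2 ^ (k + 1)) *
          (∏ i ∈ range r, (-(1 / 2) - (i : ℂ))) * exp (((r : ℤ) : ℂ) * -τ)
          = 2 * (exp ((1 / 2 + (r : ℂ)) * θ / 2 ^ (k + 1) + ((r : ℤ) : ℂ) * -τ)) *
            (∏ i ∈ range r, (-(1 / 2) - (i : ℂ))) by rw [Complex.exp_add]; ring]
      rw [show (1 / 2 + (r : ℂ)) * θ / 2 ^ (k + 1) + ((r : ℤ) : ℂ) * -τ = τ / 2 by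
        rw [hτ]; push_cast; ring]
    rw [hD r]
    have hsum : ∑ j ∈ s, (c j : ℂ) * (∏ i ∈ range r, ((j : ℂ) - (i : ℂ))) * w ^ (j - (r : ℤ))
        = (∑ j ∈ s, (c j : ℂ) * (Pfall r).eval ((j : ℤ) : ℂ) * w ^ (j : ℤ)) * (w ^ (r : ℤ))⁻¹ := by
      rw [Finset.sum_mul]
      refine Finset.sum_congr rfl fun j hj => ?_
      rw [Pfall_eval, show (j : ℤ) - (r : ℤ) = j + -(r : ℤ) by ring, zpow_add₀ hw0, zpow_neg]
      ring
    rw [hsum]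
    simp only [hPhidef]
    rw [sub_eq_zero, mul_inv_eq_iff_eq_mul₀ (zpow_ne_zero _ hw0), hexp]
  -- key equivalence at w⁻¹
  have keyinv : ∀ r : ℕ,
      (iteratedDeriv r a w⁻¹ = 2 * exp (-(1 / 2 + (r : ℂ)) * θ / 2 ^ (k + 1)) *
          ∏ i ∈ range r, (-(1 / 2) - (i : ℂ))) ↔ Φ ((Pfall r).comp (C (-1) - X)) = 0 := by
    intro r
    have hexp : 2 * exp (τ / 2) * ((Pfall r).comp (C (-1) - X)).eval (-(1 / 2)) * w ^ ((1 : ℤ) + r)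
        = 2 * exp (-(1 / 2 + (r : ℂ)) * θ / 2 ^ (k + 1)) *
          ∏ i ∈ range r, (-(1 / 2) - (i : ℂ)) := by
      have he1 : (C (-1 : ℂ) - X).eval (-(1 / 2)) = -(1 / 2) := by
        rw [eval_sub, eval_C, eval_X]; norm_num
      rw [eval_comp, he1, Pfall_eval, hwdef, ← Complex.exp_int_mul]
      rw [show 2 * exp (τ / 2) * (∏ i ∈ range r, (-(1 / 2) - (i : ℂ))) *
          exp ((((1 : ℤ) + r : ℤ) : ℂ) * -τ)
          = 2 * (exp (τ / 2 + (((1 : ℤ) + r : ℤ) : ℂ) * -τ)) *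
            (∏ i ∈ range r, (-(1 / 2) - (i : ℂ))) by rw [Complex.exp_add]; ring]
      rw [show τ / 2 + (((1 : ℤ) + r : ℤ) : ℂ) * -τ = -(1 / 2 + (r : ℂ)) * θ / 2 ^ (k + 1) by
        rw [hτ]; push_cast; ring]
    rw [hD' r]
    have hsum : ∑ j ∈ s.map emb, (c' j : ℂ) * (∏ i ∈ range r, ((j : ℂ) - (i : ℂ)))
          * (w⁻¹) ^ (j - (r : ℤ))
        = (∑ j ∈ s, (c j : ℂ) * ((Pfall r).comp (C (-1) - X)).eval ((j : ℤ) : ℂ) * w ^ (j : ℤ))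
          * w ^ ((1 : ℤ) + r) := by
      rw [Finset.sum_map, Finset.sum_mul]
      refine Finset.sum_congr rfl fun j hj => ?_
      show (c' (-1 - j) : ℂ) * (∏ i ∈ range r, (((-1 - j : ℤ) : ℂ) - (i : ℂ)))
          * (w⁻¹) ^ ((-1 - j : ℤ) - (r : ℤ))
        = (c j : ℂ) * ((Pfall r).comp (C (-1) - X)).eval ((j : ℤ) : ℂ) * w ^ (j : ℤ)
          * w ^ ((1 : ℤ) + r)
      have hcc : c' (-1 - j) = c j := by rw [hcpdef]; norm_num
      have he2 : (C (-1 : ℂ) - X).eval ((j : ℤ) : ℂ) = -1 - (j : ℂ) := by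
        rw [eval_sub, eval_C, eval_X]
      rw [hcc, eval_comp, he2, Pfall_eval]
      rw [show ((w⁻¹ : ℂ)) ^ ((-1 - j : ℤ) - (r : ℤ)) = w ^ (-((-1 - j : ℤ) - (r : ℤ))) by
        rw [inv_zpow, ← zpow_neg],
        show -((-1 - j : ℤ) - (r : ℤ)) = j + (1 + r) by ring, zpow_add₀ hw0]
      push_cast
      ring
    rw [hsum]
    simp only [hPhidef]
    rw [sub_eq_zero, ← hexp, mul_left_inj' (zpow_ne_zero _ hw0)]
  -- assemble
  constructor
  · intro H r hr
    rw [keyinv r]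
    refine span_aux d Φ hΦadd hΦsmul (fun r' hr' => (keyw r').mp (H r' hr')) r hr _ ?_
    calc ((Pfall r).comp (C (-1) - X)).natDegree
        ≤ (Pfall r).natDegree * (C (-1 : ℂ) - X).natDegree := natDegree_comp_le
      _ = r := by rw [Pfall_natDegree, hq, mul_one]
  · intro H r hr
    rw [keyw r]
    set Ψ : Polynomial ℂ → ℂ := fun Q => Φ (Q.comp (C (-1) - X)) with hPsidef
    have hΨadd : ∀ Q R, Ψ (Q + R) = Ψ Q + Ψ R := by
      intro Q R; simp only [hPsidef, add_comp]; exact hΦadd _ _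
    have hΨsmul : ∀ (t : ℂ) (Q), Ψ (C t * Q) = t * Ψ Q := by
      intro t Q; simp only [hPsidef, mul_comp, C_comp]; exact hΦsmul _ _
    have hΨP : ∀ r' < d, Ψ (Pfall r') = 0 := fun r' hr' => (keyinv r').mp (H r' hr')
    have := span_aux d Ψ hΨadd hΨsmul hΨP r hr ((Pfall r).comp (C (-1) - X))
      (by calc ((Pfall r).comp (C (-1) - X)).natDegree
            ≤ (Pfall r).natDegree * (C (-1 : ℂ) - X).natDegree := natDegree_comp_le
          _ = r := by rw [Pfall_natDegree, hq, mul_one])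
    have h2 : Ψ ((Pfall r).comp (C (-1) - X)) = Φ (Pfall r) := by
      simp only [hPsidef]
      rw [comp_assoc, hqq, comp_X]
    rwa [h2] at this
end

section
/- Let N ≥ 2 be even, k ≥ 0, and let Γ = {γ_1, …, γ_N} be a multiset of complex numbers invariant under negation. Fix θ ∈ Γ with θ either a positive real number or θ = iβ, β ∈ [0,π) (so −θ ∈ Γ as well), and let Γ' denote Γ with one copy of θ and one copy of −θ removed. Define B̃_N(z) := z^{−N/2}·∏_{γ∈Γ}(e^{γ/2^{k+1}}z + 1), B̃_{N−2}(z) := z^{−(N−2)/2}·∏_{γ∈Γ'}(e^{γ/2^{k+1}}z + 1), and w := e^{−θ/2^{k+1}}. Assume D := (e^{−θ/2^{k+1}} + e^{θ/2^{k+1}})·B̃_{N−2}(e^{θ/2^{k+1}}) ≠ 0. Then D⁻¹·B̃_N(w) = 2 and D⁻¹·B̃_N(w⁻¹) = 2; that is, with normalization factor K = D⁻¹ the normalized exponential B-spline symbol K·B̃_N satisfies the conditions for reproduction of {e^{θx}, e^{−θx}} with shift parameter p = 0. -/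
open Complex

/-- The `k`-level symbol of the (not-normalized) exponential B-spline associated with
the multiset `Γ`: `z^E · ∏_{γ ∈ Γ} (e^{γ/2^{k+1}} z + 1)`. -/
noncomputable def expBSplineSymbol (k : ℕ) (E : ℤ) (Γ : Multiset ℂ) (z : ℂ) : ℂ :=
  z ^ E * (Γ.map (fun γ => Complex.exp (γ / 2 ^ (k + 1)) * z + 1)).prod

private lemma exp_mul_prod_aux (c w : ℂ) (s : Multiset ℂ) :
    (s.map (fun γ => Complex.exp (-γ / c) * w)).prod =
      Complex.exp (-s.sum / c) * w ^ Multiset.card s := by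
  induction s using Multiset.induction with
  | empty => simp
  | cons a s ih =>
    simp only [Multiset.map_cons, Multiset.prod_cons, ih, Multiset.sum_cons,
      Multiset.card_cons, pow_succ]
    rw [show -(a + s.sum) / c = -a / c + -s.sum / c by ring, Complex.exp_add]
    ring

/-- Even-order case: with the normalization factor `K = D⁻¹`, the normalized exponential
B-spline symbol satisfies the conditions for reproduction of `{e^{θx}, e^{-θx}}` with
shift parameter `p = 0`, i.e. it takes the value `2` at `w = e^{-θ/2^{k+1}}` and at `w⁻¹`. -/
theorem normalized_expBSpline_reproduction_even (N k : ℕ) (hN : 2 ≤ N) (hNeven : Even N)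
    (θ : ℂ)
    (hθ : (∃ t : ℝ, 0 < t ∧ θ = (t : ℂ)) ∨
          (∃ β : ℝ, 0 ≤ β ∧ β < Real.pi ∧ θ = (β : ℂ) * I))
    (Γ Γ' : Multiset ℂ)
    (hcard : Multiset.card Γ = N)
    (hsym : Γ.map (fun x : ℂ => -x) = Γ)
    (hsplit : Γ = θ ::ₘ (-θ) ::ₘ Γ')
    (D : ℂ)
    (hDdef : D = (exp (-θ / 2 ^ (k + 1)) + exp (θ / 2 ^ (k + 1))) *
      expBSplineSymbol k (-(((N - 2) / 2 : ℕ) : ℤ)) Γ' (exp (θ / 2 ^ (k + 1))))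
    (hD : D ≠ 0) :
    D⁻¹ * expBSplineSymbol k (-((N / 2 : ℕ) : ℤ)) Γ (exp (-θ / 2 ^ (k + 1))) = 2 ∧
    D⁻¹ * expBSplineSymbol k (-((N / 2 : ℕ) : ℤ)) Γ (exp (-θ / 2 ^ (k + 1)))⁻¹ = 2 := by
  obtain ⟨n, hn⟩ := hNeven
  obtain ⟨m, rfl⟩ : ∃ m, n = m + 1 := ⟨n - 1, by omega⟩
  set c : ℂ := (2 : ℂ) ^ (k + 1) with hc
  set u : ℂ := exp (θ / c) with hu
  set w : ℂ := exp (-θ / c) with hw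
  have hwu : w * u = 1 := by
    rw [hw, hu, ← Complex.exp_add, show -θ / c + θ / c = 0 by ring, Complex.exp_zero]
  have hw0 : w ≠ 0 := Complex.exp_ne_zero _
  have hu0 : u ≠ 0 := Complex.exp_ne_zero _
  have huw : u = w⁻¹ := eq_inv_of_mul_eq_one_right hwu
  -- symmetry of Γ'
  have hsym' : Γ'.map (fun x : ℂ => -x) = Γ' := by
    have h := hsym
    rw [hsplit, Multiset.map_cons, Multiset.map_cons, neg_neg, Multiset.cons_swap] at h
    exact (Multiset.cons_inj_right _).mp ((Multiset.cons_inj_right _).mp h)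
  have hsum : Γ'.sum = 0 := by
    have h := congrArg Multiset.sum hsym'
    rw [Multiset.sum_map_neg'] at h
    linear_combination (-(1 : ℂ)/2) * h
  have hcard' : Multiset.card Γ' = 2 * m := by
    rw [hsplit] at hcard
    simp only [Multiset.card_cons] at hcard
    omega
  have hN2 : N / 2 = m + 1 := by omega
  have hN22 : (N - 2) / 2 = m := by omega
  -- the Γ' products
  set Pu : ℂ := (Γ'.map (fun γ => Complex.exp (γ / c) * u + 1)).prod with hPu
  set Pw : ℂ := (Γ'.map (fun γ => Complex.exp (γ / c) * w + 1)).prod with hPw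
  have key : Pw = w ^ (2 * m) * Pu := by
    have step1 : Pw = (Γ'.map (fun γ => Complex.exp (-γ / c) * w + 1)).prod := by
      conv_lhs => rw [hPw, ← hsym', Multiset.map_map]
      rfl
    have step2 : ∀ γ : ℂ, Complex.exp (-γ / c) * w + 1 =
        (Complex.exp (-γ / c) * w) * (Complex.exp (γ / c) * u + 1) := by
      intro γ
      have h1 : Complex.exp (-γ / c) * Complex.exp (γ / c) = 1 := by
        rw [← Complex.exp_add, show -γ / c + γ / c = 0 by ring, Complex.exp_zero]
      linear_combination (-(w * u)) * h1 - hwu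
    calc Pw = (Γ'.map (fun γ =>
          (Complex.exp (-γ / c) * w) * (Complex.exp (γ / c) * u + 1))).prod := by
          rw [step1]; exact congrArg _ (Multiset.map_congr rfl (fun γ _ => step2 γ))
      _ = (Γ'.map (fun γ => Complex.exp (-γ / c) * w)).prod * Pu :=
          Multiset.prod_map_mul
      _ = w ^ (2 * m) * Pu := by
          rw [exp_mul_prod_aux, hsum, hcard']
          simp
  -- value of D
  have hDval : D = (w + u) * ((u ^ m)⁻¹ * Pu) := by
    rw [hDdef, expBSplineSymbol, hN22]
    rw [zpow_neg, zpow_natCast]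
  have e1 : expBSplineSymbol k (-((N / 2 : ℕ) : ℤ)) Γ w = 2 * D := by
    rw [expBSplineSymbol, hsplit, Multiset.map_cons, Multiset.map_cons,
      Multiset.prod_cons, Multiset.prod_cons, hN2, zpow_neg, zpow_natCast,
      ← hc, ← hu, ← hw, ← hPw, key, hDval, huw]
    simp only [inv_pow, inv_inv]
    field_simp
    ring
  have e2 : expBSplineSymbol k (-((N / 2 : ℕ) : ℤ)) Γ w⁻¹ = 2 * D := by
    rw [expBSplineSymbol, hsplit, Multiset.map_cons, Multiset.map_cons,
      Multiset.prod_cons, Multiset.prod_cons, hN2, zpow_neg, zpow_natCast,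
      ← hc, ← hu, ← hw, ← huw, ← hPu, hDval, huw]
    simp only [inv_pow, inv_inv]
    field_simp
    ring
  constructor
  · rw [e1]; field_simp
  · rw [e2]; field_simp
end

section
/- Let N ≥ 3 be odd, k ≥ 0, and let Γ = {γ_1, …, γ_N} be a multiset of complex numbers invariant under negation containing 0. Fix θ ∈ Γ, θ ≠ 0, with θ either a positive real number or θ = iβ, β ∈ (0,π), and let Γ'' denote Γ with one copy each of θ, −θ and 0 removed. Define B̃_N(z) := z^{−(N+1)/2}·∏_{γ∈Γ}(e^{γ/2^{k+1}}z + 1), B̃_{N−3}(z) := z^{−(N−3)/2}·∏_{γ∈Γ''}(e^{γ/2^{k+1}}z + 1), and w := e^{−θ/2^{k+1}}. Assume D := (e^{−θ/2^{k+2}} + e^{θ/2^{k+2}})·(e^{−θ/2^{k+1}} + e^{θ/2^{k+1}})·B̃_{N−3}(e^{θ/2^{k+1}}) ≠ 0. Then D⁻¹·B̃_N(w) = 2·e^{θ/2^{k+2}} and D⁻¹·B̃_N(w⁻¹) = 2·e^{−θ/2^{k+2}}; that is, with normalization factor K = D⁻¹ the normalized exponential B-spline symbol K·B̃_N satisfies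 the conditions for reproduction of {e^{θx}, e^{−θx}} with shift parameter p = −1/2. -/
open Complex

lemma aux_sum_zero (S : Multiset ℂ) (h : S.map (fun x : ℂ => -x) = S) : S.sum = 0 := by
  have h2 := congrArg Multiset.sum h
  rw [Multiset.sum_map_neg'] at h2
  linear_combination (-1/2 : ℂ) * h2

lemma aux_prod_map_exp (f : ℂ → ℂ) (S : Multiset ℂ) :
    (S.map (fun γ => Complex.exp (f γ))).prod = Complex.exp ((S.map f).sum) := by
  induction S using Multiset.induction with
  | empty => simp
  | cons a s ih => simp [Complex.exp_add, ih]

lemma aux_sum_map_div (S : Multiset ℂ) (c : ℂ) :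
    (S.map (fun γ => γ / c)).sum = S.sum / c := by
  induction S using Multiset.induction with
  | empty => simp
  | cons a s ih => simp [ih, add_div]

lemma aux_flip (S : Multiset ℂ) (hS : S.map (fun x : ℂ => -x) = S) (c z : ℂ) (hz : z ≠ 0) :
    (S.map (fun γ => Complex.exp (γ / c) * z⁻¹ + 1)).prod =
      z⁻¹ ^ Multiset.card S * (S.map (fun γ => Complex.exp (γ / c) * z + 1)).prod := by
  have hzz : z * z⁻¹ = 1 := mul_inv_cancel₀ hz
  have hfac : (fun γ : ℂ => Complex.exp (γ / c) * z⁻¹ + 1) =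
      fun γ : ℂ => (z⁻¹ * Complex.exp (γ / c)) * (Complex.exp (-γ / c) * z + 1) := by
    funext γ
    have h1 : Complex.exp (γ / c) * Complex.exp (-γ / c) = 1 := by
      rw [← Complex.exp_add]
      rw [neg_div, add_neg_cancel, Complex.exp_zero]
    linear_combination (-(z⁻¹ * z)) * h1 - hzz
  rw [hfac, Multiset.prod_map_mul, Multiset.prod_map_mul]
  have hconst : (S.map (fun _ : ℂ => z⁻¹)).prod = z⁻¹ ^ Multiset.card S := by
    simp [Multiset.map_const']
  have hexp : (S.map (fun γ : ℂ => Complex.exp (γ / c))).prod = 1 := by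
    rw [aux_prod_map_exp (fun γ => γ / c) S, aux_sum_map_div, aux_sum_zero S hS]
    simp
  have hneg : (S.map (fun γ : ℂ => Complex.exp (-γ / c) * z + 1)).prod =
      (S.map (fun γ : ℂ => Complex.exp (γ / c) * z + 1)).prod := by
    conv_rhs => rw [← hS, Multiset.map_map]
    rfl
  rw [hconst, hexp, hneg, mul_one]

/-- Odd-order case: with the normalization factor `K = D⁻¹`, the normalized exponential
B-spline symbol satisfies the conditions for reproduction of `{e^{θx}, e^{-θx}}` with
shift parameter `p = -1/2`, i.e. it takes the value `2·e^{θ/2^{k+2}}` at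
`w = e^{-θ/2^{k+1}}` and the value `2·e^{-θ/2^{k+2}}` at `w⁻¹`. -/
theorem normalized_expBSpline_reproduction_odd (N k : ℕ) (hN : 3 ≤ N) (hNodd : Odd N)
    (θ : ℂ) (hθ0 : θ ≠ 0)
    (hθ : (∃ t : ℝ, 0 < t ∧ θ = (t : ℂ)) ∨
          (∃ β : ℝ, 0 < β ∧ β < Real.pi ∧ θ = (β : ℂ) * I))
    (Γ Γ'' : Multiset ℂ)
    (hcard : Multiset.card Γ = N)
    (hsym : Γ.map (fun x : ℂ => -x) = Γ)
    (hsplit : Γ = θ ::ₘ (-θ) ::ₘ (0 : ℂ) ::ₘ Γ'')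
    (D : ℂ)
    (hDdef : D = (exp (-θ / 2 ^ (k + 2)) + exp (θ / 2 ^ (k + 2))) *
      (exp (-θ / 2 ^ (k + 1)) + exp (θ / 2 ^ (k + 1))) *
      expBSplineSymbol k (-(((N - 3) / 2 : ℕ) : ℤ)) Γ'' (exp (θ / 2 ^ (k + 1))))
    (hD : D ≠ 0) :
    D⁻¹ * expBSplineSymbol k (-(((N + 1) / 2 : ℕ) : ℤ)) Γ (exp (-θ / 2 ^ (k + 1))) =
      2 * exp (θ / 2 ^ (k + 2)) ∧
    D⁻¹ * expBSplineSymbol k (-(((N + 1) / 2 : ℕ) : ℤ)) Γ (exp (-θ / 2 ^ (k + 1)))⁻¹ =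
      2 * exp (-θ / 2 ^ (k + 2)) := by
  obtain ⟨m, hm⟩ := hNodd
  obtain ⟨n, rfl⟩ : ∃ n, N = 2 * n + 3 := ⟨m - 1, by omega⟩
  have hcard'' : Multiset.card Γ'' = 2 * n := by
    rw [hsplit] at hcard
    simp only [Multiset.card_cons] at hcard
    omega
  have hsym'' : Γ''.map (fun x : ℂ => -x) = Γ'' := by
    rw [hsplit, Multiset.map_cons, Multiset.map_cons, Multiset.map_cons, neg_neg, neg_zero]
      at hsym
    rw [Multiset.cons_swap] at hsym
    exact (Multiset.cons_inj_right _).mp ((Multiset.cons_inj_right _).mp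
      ((Multiset.cons_inj_right _).mp hsym))
  have hE1 : ((2 * n + 3 + 1) / 2 : ℕ) = n + 2 := by omega
  have hE2 : ((2 * n + 3 - 3) / 2 : ℕ) = n := by omega
  set w : ℂ := Complex.exp (-θ / 2 ^ (k + 1)) with hwdef
  set v : ℂ := Complex.exp (θ / 2 ^ (k + 2)) with hvdef
  have hwne : w ≠ 0 := Complex.exp_ne_zero _
  have hvne : v ≠ 0 := Complex.exp_ne_zero _
  have h2pow : (2 : ℂ) ^ (k + 2) = 2 * 2 ^ (k + 1) := by ring
  have h2 : θ / 2 ^ (k + 1) = θ / 2 ^ (k + 2) + θ / 2 ^ (k + 2) := by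
    rw [h2pow]
    have h2ne : (2 : ℂ) ^ (k + 1) ≠ 0 := pow_ne_zero _ two_ne_zero
    field_simp
    ring
  have hinv : Complex.exp (θ / 2 ^ (k + 1)) = w⁻¹ := by
    rw [hwdef, ← Complex.exp_neg, neg_div, neg_neg]
  have hw : w = (v * v)⁻¹ := by
    rw [hwdef, hvdef, neg_div, Complex.exp_neg, h2, Complex.exp_add]
  have hexp3 : Complex.exp (-θ / 2 ^ (k + 2)) = v⁻¹ := by
    rw [neg_div, Complex.exp_neg, hvdef]
  have hflip'' := aux_flip Γ'' hsym'' (2 ^ (k + 1)) w hwne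
  have hflipΓ := aux_flip Γ hsym (2 ^ (k + 1)) w hwne
  rw [hcard''] at hflip''
  rw [hcard] at hflipΓ
  set P : ℂ := (Γ''.map (fun γ => Complex.exp (γ / 2 ^ (k + 1)) * w + 1)).prod with hPdef
  clear_value P
  clear_value w v
  have hDval : D = (v⁻¹ + v) * (w + w⁻¹) * ((w ^ n)⁻¹ * P) := by
    rw [hDdef, hinv, hexp3]
    simp only [expBSplineSymbol, hE2, hflip'', zpow_neg, zpow_natCast, inv_pow, inv_inv]
    field_simp
    ring
  have hvvne : v * v ≠ 0 := mul_ne_zero hvne hvne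
  constructor
  · have key1 : expBSplineSymbol k (-(((2 * n + 3 + 1) / 2 : ℕ) : ℤ)) Γ w = 2 * v * D := by
      rw [hDval, hsplit]
      simp only [expBSplineSymbol, Multiset.map_cons, Multiset.prod_cons, hE1, hinv,
        ← hwdef, ← hPdef, zero_div, Complex.exp_zero, one_mul, zpow_neg, zpow_natCast]
      rw [hw]
      field_simp
      have hv4 : v ^ 4 * v⁻¹ ^ 4 = 1 := by rw [← mul_pow, mul_inv_cancel₀ hvne, one_pow]
      linear_combination (-(P * v⁻¹ ^ (n * 2) * 2 * (1 + v ^ 2 + v ^ 4 + v ^ 6))) * hv4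
    rw [key1]
    field_simp
  · have key2 : expBSplineSymbol k (-(((2 * n + 3 + 1) / 2 : ℕ) : ℤ)) Γ w⁻¹ = 2 * v⁻¹ * D := by
      rw [hDval]
      simp only [expBSplineSymbol, hE1, hflipΓ, zpow_neg, zpow_natCast, inv_pow, inv_inv]
      rw [hsplit]
      simp only [Multiset.map_cons, Multiset.prod_cons, hinv, ← hwdef, ← hPdef, zero_div,
        Complex.exp_zero, one_mul]
      rw [hw]
      field_simp
      have hv2 : v ^ 2 * v⁻¹ ^ 2 = 1 := by rw [← mul_pow, mul_inv_cancel₀ hvne, one_pow]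
      linear_combination (-(v⁻¹ ^ 4 * v⁻¹ ^ (n * 4) * P * 2 * (1 + v ^ 2 + v ^ 4 + v ^ 6))) * hv2
    rw [key2, hexp3]
    field_simp
end

section
/- Let ρ ≥ 1 be an integer and let c be a Laurent polynomial over ℂ supported in degrees [1−ρ, ρ−1], i.e. c(z) = Σ_{j=1−ρ}^{ρ−1} c_j z^j, satisfying the symmetry c(z) = c(z⁻¹) for all z ≠ 0. Let w_1, …, w_m ∈ ℂ∖{0, 1, −1} be pairwise distinct points such that w_ℓ·w_j ≠ 1 for all ℓ, j, and let τ_1, …, τ_m ≥ 1 be integers with τ_1 + ⋯ + τ_m = ρ. If for every ℓ = 1, …, m and every s = 0, …, τ_ℓ−1 the s-th complex derivative of c at w_ℓ vanishes, then c is identically zero. -/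
open Finset

section Aux
open Polynomial


private lemma aux_M {I : Finset ℤ} {u : ℤ → ℂ} {τ : ℕ}
    (H : ∀ s < τ, ∑ j ∈ I, u j * ∏ i ∈ Finset.range s, ((j : ℂ) - (i : ℕ)) = 0) :
    ∀ q : Polynomial ℂ, q.natDegree < τ → ∑ j ∈ I, u j * q.eval (j : ℂ) = 0 := by
  suffices h : ∀ s, s < τ → ∀ q : Polynomial ℂ, q.natDegree ≤ s →
      ∑ j ∈ I, u j * q.eval (j : ℂ) = 0 by
    intro q hq; exact h q.natDegree hq q le_rfl
  intro s
  induction s using Nat.strong_induction_on with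
  | _ s IH =>
    intro hsτ q hq
    have hpow : ∀ k ≤ s, ∑ j ∈ I, u j * (j : ℂ) ^ k = 0 := by
      intro k hk
      set p : Polynomial ℂ := ∏ i ∈ Finset.range k, (X - C ((i : ℕ) : ℂ)) with hp
      have hmon : p.Monic := monic_prod_of_monic _ _ fun i _ => monic_X_sub_C _
      have hdeg : p.natDegree = k := by
        rw [hp, natDegree_prod _ _ fun i _ => X_sub_C_ne_zero _,
          Finset.sum_congr rfl fun i _ => natDegree_X_sub_C (x := ((i : ℕ) : ℂ))]
        simp
      have hevp : ∀ j : ℤ, p.eval (j : ℂ) = ∏ i ∈ Finset.range k, ((j : ℂ) - (i : ℕ)) := by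
        intro j; rw [hp, eval_prod]; exact Finset.prod_congr rfl fun i _ => by simp
      have h1 : ∑ j ∈ I, u j * p.eval (j : ℂ) = 0 := by
        rw [Finset.sum_congr rfl fun j _ => by rw [hevp j]]
        exact H k (lt_of_le_of_lt hk hsτ)
      rcases Nat.eq_zero_or_pos k with rfl | hk0
      · simpa [hp] using h1
      · have hdeg2 : (X ^ k - p).natDegree ≤ k - 1 := by
          by_cases h0 : X ^ k - p = 0
          · simp [h0]
          · have hdp : (X ^ k : Polynomial ℂ).degree = p.degree := by
              rw [degree_X_pow, degree_eq_natDegree hmon.ne_zero, hdeg]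
            have hlt := degree_sub_lt hdp (pow_ne_zero _ X_ne_zero)
              (by rw [leadingCoeff_X_pow, hmon.leadingCoeff])
            rw [degree_X_pow] at hlt
            have := (natDegree_lt_iff_degree_lt h0).mpr hlt
            omega
        have h2 : ∑ j ∈ I, u j * (X ^ k - p).eval (j : ℂ) = 0 :=
          IH (k - 1) (by omega) (by omega) _ hdeg2
        have h3 : ∀ j : ℤ, (j : ℂ) ^ k = p.eval (j : ℂ) + (X ^ k - p).eval (j : ℂ) := by
          intro j; simp [eval_sub, eval_pow]
        calc ∑ j ∈ I, u j * (j : ℂ) ^ k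
            = ∑ j ∈ I, (u j * p.eval (j : ℂ) + u j * (X ^ k - p).eval (j : ℂ)) := by
              refine Finset.sum_congr rfl fun j _ => ?_; rw [h3 j]; ring
          _ = 0 := by rw [Finset.sum_add_distrib, h1, h2, add_zero]
    calc ∑ j ∈ I, u j * q.eval (j : ℂ)
        = ∑ j ∈ I, ∑ k ∈ Finset.range (s + 1), q.coeff k * (u j * (j : ℂ) ^ k) := by
          refine Finset.sum_congr rfl fun j _ => ?_
          rw [eval_eq_sum_range' (Nat.lt_succ_of_le hq), Finset.mul_sum]
          exact Finset.sum_congr rfl fun k _ => by ring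
      _ = ∑ k ∈ Finset.range (s + 1), q.coeff k * ∑ j ∈ I, u j * (j : ℂ) ^ k := by
          rw [Finset.sum_comm]
          exact Finset.sum_congr rfl fun k _ => by rw [Finset.mul_sum]
      _ = 0 := by
          refine Finset.sum_eq_zero fun k hk => ?_
          rw [hpow k (Nat.lt_succ_iff.mp (Finset.mem_range.mp hk)), mul_zero]


private lemma aux_deriv (I : Finset ℤ) (c : ℂ → ℂ) (co : ℤ → ℂ)
    (hc : ∀ z : ℂ, z ≠ 0 → c z = ∑ j ∈ I, co j * z ^ j) :
    ∀ (s : ℕ) (z : ℂ), z ≠ 0 →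
      iteratedDeriv s c z =
        ∑ j ∈ I, (co j * ∏ i ∈ Finset.range s, ((j : ℂ) - (i : ℕ))) * z ^ (j - (s : ℕ)) := by
  intro s
  induction s with
  | zero => intro z hz; simpa using hc z hz
  | succ s IH =>
    intro z hz
    rw [iteratedDeriv_succ]
    have hev : iteratedDeriv s c =ᶠ[nhds z]
        fun y => ∑ j ∈ I, (co j * ∏ i ∈ Finset.range s, ((j : ℂ) - (i : ℕ))) * y ^ (j - (s : ℕ)) := by
      filter_upwards [IsOpen.mem_nhds isOpen_compl_singleton hz] with y hy
      exact IH y hy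
    rw [hev.deriv_eq]
    rw [deriv_fun_sum fun j _ => DifferentiableAt.const_mul
      (differentiableAt_zpow.mpr (Or.inl hz)) _]
    refine Finset.sum_congr rfl fun j hj => ?_
    rw [deriv_const_mul _ (differentiableAt_zpow.mpr (Or.inl hz)), deriv_zpow]
    rw [Finset.prod_range_succ]
    have h1 : ((j - (s : ℕ) : ℤ) : ℂ) = (j : ℂ) - (s : ℕ) := by push_cast; ring
    have h2 : (j - (s : ℕ) : ℤ) - 1 = j - ((s + 1 : ℕ) : ℤ) := by push_cast; ring
    rw [h1, h2]; ring

private lemma aux_iter (a : ℂ) (n : ℕ) :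
    ∀ s : ℕ, Polynomial.derivative^[s] (Polynomial.C a * Polynomial.X ^ n) =
      Polynomial.C (a * ∏ i ∈ Finset.range s, ((n : ℂ) - (i : ℕ))) * Polynomial.X ^ (n - s) := by
  intro s
  induction s with
  | zero => simp
  | succ s IH =>
    rw [Function.iterate_succ_apply', IH]
    rcases lt_trichotomy s n with hlt | rfl | hgt
    · rw [derivative_C_mul, derivative_X_pow, Finset.prod_range_succ]
      have h1 : ((n - s : ℕ) : ℂ) = (n : ℂ) - (s : ℕ) := by push_cast [Nat.cast_sub hlt.le]; ring
      have h2 : n - s - 1 = n - (s + 1) := by omega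
      rw [h2, h1, ← mul_assoc, ← map_mul, mul_assoc a]
    · have h0 : a * ∏ i ∈ Finset.range (s + 1), ((s : ℂ) - (i : ℕ)) = 0 := by
        rw [Finset.prod_eq_zero (Finset.mem_range.mpr s.lt_succ_self) (by simp)]
        ring
      rw [Nat.sub_self, pow_zero, mul_one, derivative_C, h0, map_zero, zero_mul]
    · have h0 : a * ∏ i ∈ Finset.range s, ((n : ℂ) - (i : ℕ)) = 0 := by
        rw [Finset.prod_eq_zero (Finset.mem_range.mpr hgt) (by simp)]
        ring
      have h0' : a * ∏ i ∈ Finset.range (s + 1), ((n : ℂ) - (i : ℕ)) = 0 := by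
        rw [Finset.prod_eq_zero (Finset.mem_range.mpr (by omega : n < s + 1)) (by simp)]
        ring
      rw [h0, h0', map_zero, zero_mul, zero_mul, derivative_zero]

end Aux


/-- Uniqueness for the symmetric Hermite interpolation problem: a symmetric Laurent
polynomial supported in degrees `[1-ρ, ρ-1]` whose derivatives up to order `τ_ℓ - 1`
vanish at `m` suitable nodes `w_ℓ` with `τ_1 + ⋯ + τ_m = ρ` is identically zero. -/
theorem symmetric_laurent_hermite_uniqueness (ρ : ℕ) (hρ : 1 ≤ ρ)
    (c : ℂ → ℂ) (co : ℤ → ℂ)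
    (hc : ∀ z : ℂ, z ≠ 0 →
      c z = ∑ j ∈ Finset.Icc (1 - (ρ : ℤ)) ((ρ : ℤ) - 1), co j * z ^ j)
    (hsym : ∀ z : ℂ, z ≠ 0 → c z = c z⁻¹)
    (m : ℕ) (hm : 1 ≤ m) (w : Fin m → ℂ)
    (hw0 : ∀ ℓ, w ℓ ≠ 0) (hw1 : ∀ ℓ, w ℓ ≠ 1) (hwm1 : ∀ ℓ, w ℓ ≠ -1)
    (hinj : Function.Injective w)
    (hprod : ∀ ℓ j, w ℓ * w j ≠ 1)
    (τ : Fin m → ℕ) (hτ : ∀ ℓ, 1 ≤ τ ℓ) (hsum : ∑ ℓ, τ ℓ = ρ)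
    (hvan : ∀ ℓ, ∀ s < τ ℓ, iteratedDeriv s c (w ℓ) = 0) :
    ∀ z : ℂ, z ≠ 0 → c z = 0 := by
  classical
  set I : Finset ℤ := Finset.Icc (1 - (ρ : ℤ)) ((ρ : ℤ) - 1) with hIdef
  have hmem : ∀ j : ℤ, j ∈ I ↔ 1 - (ρ : ℤ) ≤ j ∧ j ≤ (ρ : ℤ) - 1 := fun j => Finset.mem_Icc
  have hnegmem : ∀ j : ℤ, j ∈ I → -j ∈ I := fun j hj => by
    rw [hmem] at hj ⊢; omega
  set nn : ℤ → ℕ := fun j => (j + (ρ : ℤ) - 1).toNat with hnndef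
  have hcast : ∀ j ∈ I, ((nn j : ℤ)) = j + (ρ : ℤ) - 1 := fun j hj =>
    Int.toNat_of_nonneg (by rw [hmem] at hj; omega)
  set P : Polynomial ℂ := ∑ j ∈ I, Polynomial.C (co j) * Polynomial.X ^ (nn j) with hPdef
  -- basic zpow identity
  have hzpow : ∀ z : ℂ, z ≠ 0 → ∀ j ∈ I, z ^ (nn j) = z ^ (ρ - 1) * z ^ (j : ℤ) := by
    intro z hz j hj
    rw [← zpow_natCast z (nn j), hcast j hj,
      show j + (ρ : ℤ) - 1 = ((ρ - 1 : ℕ) : ℤ) + j by omega, zpow_add₀ hz, zpow_natCast]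
  have hPeval : ∀ z : ℂ, z ≠ 0 → P.eval z = z ^ (ρ - 1) * c z := by
    intro z hz
    rw [hc z hz, hPdef, Polynomial.eval_finset_sum, Finset.mul_sum]
    refine Finset.sum_congr rfl fun j hj => ?_
    rw [Polynomial.eval_mul, Polynomial.eval_C, Polynomial.eval_pow, Polynomial.eval_X,
      hzpow z hz j hj]
    ring
  -- the reflected polynomial
  set Q : Polynomial ℂ :=
    ∑ j ∈ I, Polynomial.C (co j) * Polynomial.X ^ (((ρ : ℤ) - 1 - j).toNat) with hQdef
  have hcast' : ∀ j ∈ I, ((((ρ : ℤ) - 1 - j).toNat : ℤ)) = (ρ : ℤ) - 1 - j := fun j hj =>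
    Int.toNat_of_nonneg (by rw [hmem] at hj; omega)
  have hQeval : ∀ z : ℂ, z ≠ 0 → Q.eval z = z ^ (ρ - 1) * c z⁻¹ := by
    intro z hz
    rw [hc _ (inv_ne_zero hz), hQdef, Polynomial.eval_finset_sum, Finset.mul_sum]
    refine Finset.sum_congr rfl fun j hj => ?_
    rw [Polynomial.eval_mul, Polynomial.eval_C, Polynomial.eval_pow, Polynomial.eval_X]
    have h1 : (z : ℂ) ^ (((ρ : ℤ) - 1 - j).toNat) = z ^ (ρ - 1) * (z⁻¹) ^ (j : ℤ) := by
      rw [← zpow_natCast z, hcast' j hj, inv_zpow, ← zpow_neg,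
        show (ρ : ℤ) - 1 - j = ((ρ - 1 : ℕ) : ℤ) + (-j) by omega, zpow_add₀ hz, zpow_natCast]
    rw [h1]; ring
  have hPQ : P = Q := by
    apply Polynomial.eq_of_infinite_eval_eq
    refine Set.Infinite.mono (s := {(0 : ℂ)}ᶜ) ?_ ((Set.finite_singleton 0).infinite_compl)
    intro z hz
    simp only [Set.mem_setOf_eq]
    rw [hPeval z hz, hQeval z hz, hsym z hz]
  -- coefficient symmetry
  have hcoeffP : ∀ j ∈ I, P.coeff (nn j) = co j := by
    intro j hj
    rw [hPdef, Polynomial.finset_sum_coeff,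
      Finset.sum_eq_single j
        (fun b hb hbj => by
          have hne : ¬(nn j = nn b) := fun heq => hbj (by
            have h1 := hcast b hb; have h2 := hcast j hj; omega)
          simp [Polynomial.coeff_C_mul, Polynomial.coeff_X_pow, hne])
        (fun h => absurd hj h)]
    simp [Polynomial.coeff_C_mul, Polynomial.coeff_X_pow]
  have hcoeffQ : ∀ j ∈ I, Q.coeff (nn j) = co (-j) := by
    intro j hj
    rw [hQdef, Polynomial.finset_sum_coeff,
      Finset.sum_eq_single (-j)
        (fun b hb hbj => by
          have hne : ¬(nn j = ((ρ : ℤ) - 1 - b).toNat) := fun heq => hbj (by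
            have h1 := hcast j hj; have h2 := hcast' b hb; omega)
          simp [Polynomial.coeff_C_mul, Polynomial.coeff_X_pow, hne])
        (fun h => absurd (hnegmem j hj) h)]
    have ht : nn j = ((ρ : ℤ) - 1 - (-j)).toNat := by
      have h1 := hcast j hj; have h2 := hcast' (-j) (hnegmem j hj); omega
    simp [Polynomial.coeff_C_mul, Polynomial.coeff_X_pow, ht]
  have hco : ∀ j ∈ I, co (-j) = co j := fun j hj => by
    rw [← hcoeffQ j hj, ← hPQ, hcoeffP j hj]
  -- Hermite conditions in algebraic form
  have key : ∀ ℓ, ∀ q : Polynomial ℂ, q.natDegree < τ ℓ →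
      ∑ j ∈ I, (co j * (w ℓ) ^ (j : ℤ)) * q.eval (j : ℂ) = 0 := by
    intro ℓ
    refine aux_M (u := fun j => co j * (w ℓ) ^ (j : ℤ)) ?_
    intro s hs
    have h0 := hvan ℓ s hs
    rw [aux_deriv I c co hc s (w ℓ) (hw0 ℓ)] at h0
    have h1 := congrArg (fun x : ℂ => (w ℓ) ^ (s : ℤ) * x) h0
    simp only [mul_zero] at h1
    rw [← h1, Finset.mul_sum]
    refine Finset.sum_congr rfl fun j hj => ?_
    have h2 : (w ℓ) ^ ((s : ℕ) : ℤ) * (w ℓ) ^ (j - (s : ℕ) : ℤ) = (w ℓ) ^ (j : ℤ) := by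
      rw [← zpow_add₀ (hw0 ℓ)]; congr 1; ring
    show (co j * (w ℓ) ^ (j : ℤ)) * (∏ i ∈ Finset.range s, ((j : ℂ) - (i : ℕ)))
      = (w ℓ) ^ ((s : ℕ) : ℤ) *
        ((co j * ∏ i ∈ Finset.range s, ((j : ℂ) - (i : ℕ))) * (w ℓ) ^ (j - (s : ℕ) : ℤ))
    obtain ⟨B, hB⟩ : ∃ B, ∏ i ∈ Finset.range s, ((j : ℂ) - (i : ℕ)) = B := ⟨_, rfl⟩
    rw [hB, ← h2]; ring
  -- evaluation of iterated derivatives of P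
  have hDP : ∀ (s : ℕ) (z : ℂ), z ≠ 0 →
      z ^ s * (Polynomial.derivative^[s] P).eval z =
        z ^ (ρ - 1) * ∑ j ∈ I, (co j * z ^ (j : ℤ)) *
          ∏ i ∈ Finset.range s, ((j : ℂ) + (ρ : ℂ) - 1 - (i : ℕ)) := by
    intro s z hz
    rw [hPdef, Polynomial.iterate_derivative_sum, Polynomial.eval_finset_sum,
      Finset.mul_sum, Finset.mul_sum]
    refine Finset.sum_congr rfl fun j hj => ?_
    rw [aux_iter (co j) (nn j) s, Polynomial.eval_mul, Polynomial.eval_C, Polynomial.eval_pow,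
      Polynomial.eval_X]
    have hcastC : ((nn j : ℂ)) = (j : ℂ) + (ρ : ℂ) - 1 := by
      have h := congrArg (fun t : ℤ => (t : ℂ)) (hcast j hj)
      push_cast at h
      exact h
    by_cases hsle : s ≤ nn j
    · have hzp : z ^ s * z ^ (nn j - s) = z ^ (ρ - 1) * z ^ (j : ℤ) := by
        rw [← pow_add, show s + (nn j - s) = nn j by omega, hzpow z hz j hj]
      have hBeq : (∏ i ∈ Finset.range s, ((j : ℂ) + (ρ : ℂ) - 1 - (i : ℕ)))
          = ∏ i ∈ Finset.range s, ((nn j : ℂ) - (i : ℕ)) :=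
        Finset.prod_congr rfl fun i _ => by rw [hcastC]
      rw [hBeq]
      obtain ⟨B, hB⟩ : ∃ B, ∏ i ∈ Finset.range s, ((nn j : ℂ) - (i : ℕ)) = B := ⟨_, rfl⟩
      rw [hB]
      linear_combination (co j * B) * hzp
    · have h1 : ∏ i ∈ Finset.range s, ((nn j : ℂ) - (i : ℕ)) = 0 :=
        Finset.prod_eq_zero (i := nn j) (Finset.mem_range.mpr (by omega)) (by simp)
      have h2 : ∏ i ∈ Finset.range s, ((j : ℂ) + (ρ : ℂ) - 1 - (i : ℕ)) = 0 := by
        refine Finset.prod_eq_zero (Finset.mem_range.mpr (show nn j < s by omega)) ?_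
        rw [← hcastC]; simp
      rw [h1, h2]; ring
  -- vanishing of derivatives of P at the nodes
  have hvanP : ∀ ℓ, ∀ s < τ ℓ, (Polynomial.derivative^[s] P).eval (w ℓ) = 0 := by
    intro ℓ s hs
    have h := hDP s (w ℓ) (hw0 ℓ)
    set q : Polynomial ℂ :=
      ∏ i ∈ Finset.range s, (Polynomial.X + Polynomial.C ((ρ : ℂ) - 1 - (i : ℕ))) with hq
    have hqdeg : q.natDegree = s := by
      rw [hq, Polynomial.natDegree_prod _ _ fun i _ => (Polynomial.monic_X_add_C _).ne_zero,
        Finset.sum_congr rfl fun i _ => Polynomial.natDegree_X_add_C ((ρ : ℂ) - 1 - (i : ℕ))]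
      simp
    have hqeval : ∀ j : ℤ, q.eval (j : ℂ) =
        ∏ i ∈ Finset.range s, ((j : ℂ) + (ρ : ℂ) - 1 - (i : ℕ)) := by
      intro j
      rw [hq, Polynomial.eval_prod]
      refine Finset.prod_congr rfl fun i _ => ?_
      rw [Polynomial.eval_add, Polynomial.eval_X, Polynomial.eval_C]; ring
    have h2 : ∑ j ∈ I, (co j * (w ℓ) ^ (j : ℤ)) *
        ∏ i ∈ Finset.range s, ((j : ℂ) + (ρ : ℂ) - 1 - (i : ℕ)) = 0 := by
      have h3 := key ℓ q (by rw [hqdeg]; exact hs)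
      rw [← h3]
      exact Finset.sum_congr rfl fun j _ => by rw [hqeval j]
    rw [h2, mul_zero] at h
    exact (mul_eq_zero.mp h).resolve_left (pow_ne_zero s (hw0 ℓ))
  have hvanP' : ∀ ℓ, ∀ s < τ ℓ, (Polynomial.derivative^[s] P).eval (w ℓ)⁻¹ = 0 := by
    intro ℓ s hs
    have hv0 : (w ℓ)⁻¹ ≠ 0 := inv_ne_zero (hw0 ℓ)
    have h := hDP s (w ℓ)⁻¹ hv0
    set q : Polynomial ℂ :=
      ∏ i ∈ Finset.range s, (Polynomial.C ((ρ : ℂ) - 1 - (i : ℕ)) - Polynomial.X) with hq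
    have hfac : ∀ i : ℕ, (Polynomial.C ((ρ : ℂ) - 1 - (i : ℕ)) - Polynomial.X) =
        -(Polynomial.X - Polynomial.C ((ρ : ℂ) - 1 - (i : ℕ))) := fun i => by ring
    have hqdeg : q.natDegree = s := by
      rw [hq, Polynomial.natDegree_prod _ _ fun i _ => by
        rw [hfac i]; exact neg_ne_zero.mpr (Polynomial.X_sub_C_ne_zero _)]
      rw [Finset.sum_congr rfl fun i _ => by
        rw [hfac i, Polynomial.natDegree_neg, Polynomial.natDegree_X_sub_C]]
      simp
    have hre : ∑ j ∈ I, (co j * ((w ℓ)⁻¹) ^ (j : ℤ)) *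
        ∏ i ∈ Finset.range s, ((j : ℂ) + (ρ : ℂ) - 1 - (i : ℕ))
        = ∑ j ∈ I, (co j * (w ℓ) ^ (j : ℤ)) * q.eval (j : ℂ) := by
      refine Finset.sum_equiv (Equiv.neg ℤ) (fun j => ?_) (fun j hj => ?_)
      · show j ∈ I ↔ -j ∈ I
        exact ⟨hnegmem j, fun h => by simpa using hnegmem _ h⟩
      · show (co j * ((w ℓ)⁻¹) ^ (j : ℤ)) *
          ∏ i ∈ Finset.range s, ((j : ℂ) + (ρ : ℂ) - 1 - (i : ℕ))
          = (co (-j) * (w ℓ) ^ ((-j) : ℤ)) * q.eval (((-j) : ℤ) : ℂ)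
        rw [hco j hj]
        have hq1 : q.eval (((-j) : ℤ) : ℂ) =
            ∏ i ∈ Finset.range s, ((j : ℂ) + (ρ : ℂ) - 1 - (i : ℕ)) := by
          rw [hq, Polynomial.eval_prod]
          refine Finset.prod_congr rfl fun i _ => ?_
          rw [Polynomial.eval_sub, Polynomial.eval_X, Polynomial.eval_C]
          push_cast
          ring
        have hw1' : (w ℓ) ^ ((-j) : ℤ) = ((w ℓ)⁻¹) ^ (j : ℤ) := by
          rw [inv_zpow, ← zpow_neg]
        rw [hq1, hw1']
    have h2 : ∑ j ∈ I, (co j * ((w ℓ)⁻¹) ^ (j : ℤ)) *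
        ∏ i ∈ Finset.range s, ((j : ℂ) + (ρ : ℂ) - 1 - (i : ℕ)) = 0 := by
      rw [hre]
      exact key ℓ q (by rw [hqdeg]; exact hs)
    rw [h2, mul_zero] at h
    exact (mul_eq_zero.mp h).resolve_left (pow_ne_zero s hv0)
  -- P must vanish
  have hPz : P = 0 := by
    by_contra hP0
    set W : Fin m ⊕ Fin m → ℂ := Sum.elim w fun ℓ => (w ℓ)⁻¹ with hW
    set T : Fin m ⊕ Fin m → ℕ := Sum.elim τ τ with hT
    have hT1 : ∀ i, 1 ≤ T i := fun i => by cases i <;> exact hτ _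
    have hWinj : Function.Injective W := by
      intro x y hxy
      match x, y with
      | .inl a, .inl b => exact congrArg Sum.inl (hinj hxy)
      | .inl a, .inr b =>
        exfalso
        apply hprod a b
        rw [show W (Sum.inl a) = w a from rfl, show W (Sum.inr b) = (w b)⁻¹ from rfl] at hxy
        rw [hxy]
        exact inv_mul_cancel₀ (hw0 b)
      | .inr a, .inl b =>
        exfalso
        apply hprod b a
        rw [show W (Sum.inr a) = (w a)⁻¹ from rfl, show W (Sum.inl b) = w b from rfl] at hxy
        rw [← hxy]
        exact inv_mul_cancel₀ (hw0 a)
      | .inr a, .inr b =>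
        exact congrArg Sum.inr (hinj (inv_injective hxy))
    have hvanW : ∀ i, ∀ s < T i, (Polynomial.derivative^[s] P).eval (W i) = 0 := fun i => by
      cases i with
      | inl ℓ => exact hvanP ℓ
      | inr ℓ => exact hvanP' ℓ
    have hdvd : ∀ i, (Polynomial.X - Polynomial.C (W i)) ^ (T i) ∣ P := by
      intro i
      have hroot : ∀ s ≤ T i - 1, (Polynomial.derivative^[s] P).IsRoot (W i) := fun s hs =>
        hvanW i s (by have := hT1 i; omega)
      have hlt := Polynomial.lt_rootMultiplicity_of_isRoot_iterate_derivative_of_mem_nonZeroDivisors'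
        hP0 hroot fun m _ hm => mem_nonZeroDivisors_of_ne_zero (Nat.cast_ne_zero.mpr hm)
      exact dvd_trans (pow_dvd_pow _ (by have := hT1 i; omega))
        (P.pow_rootMultiplicity_dvd (W i))
    have hcop : ((Finset.univ : Finset (Fin m ⊕ Fin m)) : Set (Fin m ⊕ Fin m)).Pairwise
        (Function.onFun IsCoprime fun i => (Polynomial.X - Polynomial.C (W i)) ^ (T i)) := by
      intro x _ y _ hxy
      exact ((Polynomial.pairwise_coprime_X_sub_C hWinj) hxy).pow
    have hprodvd := Finset.prod_dvd_of_coprime hcop fun i _ => hdvd i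
    have hdeg1 : (∏ i : Fin m ⊕ Fin m,
        (Polynomial.X - Polynomial.C (W i)) ^ (T i)).natDegree = 2 * ρ := by
      rw [Polynomial.natDegree_prod _ _ fun i _ =>
        pow_ne_zero _ (Polynomial.X_sub_C_ne_zero _)]
      rw [Finset.sum_congr rfl fun i _ => by
        rw [Polynomial.natDegree_pow, Polynomial.natDegree_X_sub_C, mul_one]]
      rw [Fintype.sum_sum_type]
      simp only [hT, Sum.elim_inl, Sum.elim_inr, hsum]
      omega
    have hdeg2 : P.natDegree ≤ 2 * ρ - 2 := by
      rw [hPdef]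
      refine Polynomial.natDegree_sum_le_of_forall_le _ _ fun j hj => ?_
      refine le_trans (Polynomial.natDegree_C_mul_le _ _) ?_
      rw [Polynomial.natDegree_X_pow]
      have h1 := hcast j hj
      rw [hmem] at hj
      omega
    have hfin := Polynomial.natDegree_le_of_dvd hprodvd hP0
    rw [hdeg1] at hfin
    omega
  intro z hz
  have h := hPeval z hz
  rw [hPz, Polynomial.eval_zero] at h
  exact ((mul_eq_zero.mp h.symm).resolve_left (pow_ne_zero _ hz))
end

section
/- Let B be a Laurent polynomial over ℂ that is odd-symmetric, i.e. B(z) = B(z⁻¹) for all z ≠ 0. Let w_1, …, w_m ∈ ℂ∖{0, 1, −1} be pairwise distinct points with w_ℓ·w_j ≠ 1 for all ℓ, j, let τ_1, …, τ_m ≥ 1 be integers, set μ := τ_1 + ⋯ + τ_m, and assume B(w_ℓ) ≠ 0 for every ℓ. Then there exists a unique Laurent polynomial c over ℂ supported in degrees [1−μ, μ−1] with c(z) = c(z⁻¹) for all z ≠ 0 such that for every ℓ = 1, …, m and every s = 0, …, τ_ℓ−1 the s-th complex derivative of c at w_ℓ equals 2 times the s-th complex derivative of z ↦ 1/B(z)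 at w_ℓ; moreover this c satisfies the same conditions at the points w_ℓ⁻¹, i.e. the s-th derivative of c at w_ℓ⁻¹ equals 2 times the s-th derivative of 1/B at w_ℓ⁻¹ for s = 0, …, τ_ℓ−1. -/
open Finset
open Polynomial Topology Filter


private lemma itd_open {f : ℂ → ℂ} {s : Set ℂ} (hs : IsOpen s) {x : ℂ} (hx : x ∈ s) (n : ℕ) :
    iteratedDerivWithin n f s x = iteratedDeriv n f x := by
  rw [iteratedDerivWithin_eq_iteratedFDerivWithin, iteratedDeriv_eq_iteratedFDeriv,
    iteratedFDerivWithin_of_isOpen n hs hx]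

private lemma itd_add {f g : ℂ → ℂ} {s : Set ℂ} (hs : IsOpen s) {x : ℂ} (hx : x ∈ s) {n : ℕ}
    (hf : ContDiffOn ℂ n f s) (hg : ContDiffOn ℂ n g s) :
    iteratedDeriv n (fun z => f z + g z) x = iteratedDeriv n f x + iteratedDeriv n g x := by
  rw [← itd_open hs hx, ← itd_open hs hx (f := f), ← itd_open hs hx (f := g)]
  exact iteratedDerivWithin_add hx hs.uniqueDiffOn (hf x hx) (hg x hx)

private lemma itd_sub {f g : ℂ → ℂ} {s : Set ℂ} (hs : IsOpen s) {x : ℂ} (hx : x ∈ s) {n : ℕ}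
    (hf : ContDiffOn ℂ n f s) (hg : ContDiffOn ℂ n g s) :
    iteratedDeriv n (fun z => f z - g z) x = iteratedDeriv n f x - iteratedDeriv n g x := by
  rw [← itd_open hs hx, ← itd_open hs hx (f := f), ← itd_open hs hx (f := g)]
  exact iteratedDerivWithin_sub hx hs.uniqueDiffOn (hf x hx) (hg x hx)

private lemma itd_const_mul {f : ℂ → ℂ} {s : Set ℂ} (hs : IsOpen s) {x : ℂ} (hx : x ∈ s) {n : ℕ}
    (c : ℂ) (hf : ContDiffOn ℂ n f s) :
    iteratedDeriv n (fun z => c * f z) x = c * iteratedDeriv n f x := by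
  rw [← itd_open hs hx, ← itd_open hs hx (f := f)]
  exact iteratedDerivWithin_const_mul hx hs.uniqueDiffOn c (hf x hx)


private lemma contDiff_polyeval (p : Polynomial ℂ) : ContDiff ℂ ⊤ (fun z => p.eval z) := by
  have h : (fun z : ℂ => p.eval z)
      = fun z => ∑ i ∈ Finset.range (p.natDegree + 1), p.coeff i * z ^ i :=
    funext fun z => p.eval_eq_sum_range z
  rw [h]
  exact ContDiff.sum fun i _ => contDiff_const.mul (contDiff_id.pow i)

private lemma contDiffOn_zpowC (j : ℤ) :
    ContDiffOn ℂ ⊤ (fun z : ℂ => z ^ j) {(0:ℂ)}ᶜ := by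
  rcases le_or_gt 0 j with hj | hj
  · refine ((contDiff_id.pow j.toNat).contDiffOn).congr fun z hz => ?_
    rw [← zpow_natCast, Int.toNat_of_nonneg hj]; rfl
  · refine (((contDiff_id.pow (-j).toNat).contDiffOn).inv
      fun z hz => pow_ne_zero _ hz).congr fun z hz => ?_
    show z ^ j = (z ^ (-j).toNat)⁻¹
    rw [← zpow_natCast, Int.toNat_of_nonneg (by omega : (0:ℤ) ≤ -j), zpow_neg, inv_inv]

private lemma contDiffOn_laurent (e : ℤ → ℂ) (t : Finset ℤ) :
    ContDiffOn ℂ ⊤ (fun z : ℂ => ∑ j ∈ t, e j * z ^ j) {(0:ℂ)}ᶜ :=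
  ContDiffOn.sum fun j _ => contDiffOn_const.mul (contDiffOn_zpowC j)

private lemma itd_poly (p : Polynomial ℂ) (n : ℕ) (x : ℂ) :
    iteratedDeriv n (fun z => p.eval z) x = (Polynomial.derivative^[n] p).eval x := by
  induction n generalizing p with
  | zero => simp
  | succ n IH =>
    rw [iteratedDeriv_succ', Function.iterate_succ_apply]
    have h : deriv (fun z => p.eval z) = fun z => (Polynomial.derivative p).eval z :=
      funext fun z => p.deriv
    rw [h]
    exact IH _

private lemma vanish_mul {s : Set ℂ} (hs : IsOpen s) :
    ∀ (n : ℕ) (f g : ℂ → ℂ), ContDiffOn ℂ ⊤ f s → ContDiffOn ℂ ⊤ g s →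
      ∀ {x : ℂ}, x ∈ s → (∀ k < n, iteratedDeriv k f x = 0) →
      ∀ k < n, iteratedDeriv k (fun z => f z * g z) x = 0 := by
  intro n
  induction n with
  | zero => intro f g _ _ x _ _ k hk; omega
  | succ n IH =>
    intro f g hf hg x hx h0 k hk
    match k with
    | 0 =>
      rw [iteratedDeriv_zero]
      have := h0 0 (Nat.succ_pos n)
      rw [iteratedDeriv_zero] at this
      rw [this, zero_mul]
    | (t+1) =>
      rw [iteratedDeriv_succ']
      have hdf : ContDiffOn ℂ ⊤ (deriv f) s := hf.deriv_of_isOpen hs le_top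
      have hdg : ContDiffOn ℂ ⊤ (deriv g) s := hg.deriv_of_isOpen hs le_top
      have hev : deriv (fun z => f z * g z)
          =ᶠ[𝓝 x] fun z => deriv f z * g z + f z * deriv g z := by
        filter_upwards [hs.mem_nhds hx] with z hz
        exact deriv_fun_mul ((hf.differentiableOn (by simp)).differentiableAt (hs.mem_nhds hz))
          ((hg.differentiableOn (by simp)).differentiableAt (hs.mem_nhds hz))
      rw [hev.iteratedDeriv_eq]
      have ht : t < n := by omega
      have h1 : iteratedDeriv t (fun z => deriv f z * g z) x = 0 := by
        refine IH (deriv f) g hdf hg hx (fun k hk' => ?_) t ht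
        rw [← iteratedDeriv_succ']
        exact h0 (k+1) (by omega)
      have h2 : iteratedDeriv t (fun z => f z * deriv g z) x = 0 := by
        refine IH f (deriv g) hf hdg hx (fun k hk' => h0 k (by omega)) t ht
      rw [itd_add hs hx
        (((hf.deriv_of_isOpen hs le_top).of_le le_top).mul (hg.of_le le_top))
        ((hf.of_le le_top).mul ((hg.deriv_of_isOpen hs le_top).of_le le_top)), h1, h2, add_zero]

private lemma vanish_inv {s : Set ℂ} (hs : IsOpen s) :
    ∀ (n : ℕ) (f : ℂ → ℂ), ContDiffOn ℂ ⊤ f s →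
      ∀ {x : ℂ}, x ≠ 0 → x⁻¹ ∈ s → (∀ k < n, iteratedDeriv k f x⁻¹ = 0) →
      ∀ k < n, iteratedDeriv k (fun z => f z⁻¹) x = 0 := by
  intro n
  induction n with
  | zero => intro f _ x _ _ _ k hk; omega
  | succ n IH =>
    intro f hf x hx0 hxs h0 k hk
    have hUopen : IsOpen ({(0:ℂ)}ᶜ ∩ Inv.inv ⁻¹' s) :=
      continuousOn_inv₀.isOpen_inter_preimage isOpen_compl_singleton hs
    have hxU : x ∈ ({(0:ℂ)}ᶜ ∩ Inv.inv ⁻¹' s) := ⟨hx0, hxs⟩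
    match k with
    | 0 =>
      rw [iteratedDeriv_zero]
      have := h0 0 (Nat.succ_pos n)
      rwa [iteratedDeriv_zero] at this
    | (t+1) =>
      rw [iteratedDeriv_succ']
      have hinvC : ContDiffOn ℂ ⊤ (fun z : ℂ => z⁻¹) ({(0:ℂ)}ᶜ ∩ Inv.inv ⁻¹' s) :=
        (contDiffOn_inv ℂ).mono Set.inter_subset_left
      have hdf : ContDiffOn ℂ ⊤ (deriv f) s := hf.deriv_of_isOpen hs le_top
      have hev : deriv (fun z => f z⁻¹)
          =ᶠ[𝓝 x] fun z => (deriv f z⁻¹) * (-(z^2)⁻¹) := by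
        filter_upwards [hUopen.mem_nhds hxU] with z hz
        have h1 : DifferentiableAt ℂ f z⁻¹ :=
          (hf.differentiableOn (by simp)).differentiableAt (hs.mem_nhds hz.2)
        have h2 : DifferentiableAt ℂ (fun z : ℂ => z⁻¹) z := differentiableAt_inv hz.1
        have := deriv_comp (h₂ := f) (h := fun z : ℂ => z⁻¹) z h1 h2
        simp only [Function.comp_def] at this
        rw [this, deriv_inv]
      rw [hev.iteratedDeriv_eq]
      refine vanish_mul hUopen n (fun z => deriv f z⁻¹) (fun z => -(z^2)⁻¹) ?_ ?_ hxU ?_ t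
        (by omega)
      · exact ContDiffOn.comp hdf hinvC fun z hz => hz.2
      · exact (((contDiff_id.pow 2).contDiffOn).inv fun z hz => pow_ne_zero _ hz.1).neg
      · intro k hk'
        refine IH (deriv f) hdf hx0 hxs (fun k' hk'' => ?_) k hk'
        rw [← iteratedDeriv_succ']
        exact h0 (k'+1) (by omega)

private lemma core_poly {ι : Type} [Fintype ι] (q : ι → ℂ) (hq : Function.Injective q)
    (τ2 : ι → ℕ) (hτ2 : ∀ i, 1 ≤ τ2 i) (D : Polynomial ℂ)
    (hdeg : D.natDegree < ∑ i, τ2 i)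
    (hvan : ∀ i, ∀ s < τ2 i, (Polynomial.derivative^[s] D).eval (q i) = 0) : D = 0 := by
  by_contra hD
  have hdvd : ∀ i, (X - C (q i)) ^ (τ2 i) ∣ D := by
    intro i
    have h1 : τ2 i - 1 < D.rootMultiplicity (q i) :=
      (Polynomial.lt_rootMultiplicity_iff_isRoot_iterate_derivative hD).mpr
        (fun m hm => hvan i m (by have := hτ2 i; omega))
    calc (X - C (q i)) ^ (τ2 i) ∣ (X - C (q i)) ^ (D.rootMultiplicity (q i)) :=
          pow_dvd_pow _ (by omega)
      _ ∣ D := Polynomial.pow_rootMultiplicity_dvd D (q i)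
  have hprod : (∏ i, (X - C (q i)) ^ (τ2 i)) ∣ D := by
    refine Finset.prod_dvd_of_coprime (fun a _ b _ hab => ?_) fun i _ => hdvd i
    exact ((Polynomial.pairwise_coprime_X_sub_C hq) hab).pow
  have hnd := Polynomial.natDegree_le_of_dvd hprod hD
  rw [Polynomial.natDegree_prod _ _
    (fun i _ => pow_ne_zero _ (Polynomial.X_sub_C_ne_zero (q i)))] at hnd
  simp only [Polynomial.natDegree_pow, Polynomial.natDegree_X_sub_C, mul_one] at hnd
  exact absurd (lt_of_lt_of_le hdeg hnd) (lt_irrefl _)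

private lemma laurent_symm (e : ℤ → ℂ) (he : ∀ j, e (-j) = e j) (μ : ℕ) {z : ℂ} (hz : z ≠ 0) :
    ∑ j ∈ Finset.Icc (1 - (μ:ℤ)) ((μ:ℤ) - 1), e j * z ^ j
      = ∑ j ∈ Finset.Icc (1 - (μ:ℤ)) ((μ:ℤ) - 1), e j * (z⁻¹) ^ j := by
  refine Finset.sum_nbij' (i := fun j => -j) (j := fun j => -j) ?_ ?_ ?_ ?_ ?_
  · intro j hj; simp only [Finset.mem_Icc] at hj ⊢; omega
  · intro j hj; simp only [Finset.mem_Icc] at hj ⊢; omega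
  · intro j _; ring
  · intro j _; ring
  · intro j _
    rw [he, inv_zpow, ← zpow_neg, neg_neg]

private lemma core_fun (m : ℕ) (w : Fin m → ℂ) (hw0 : ∀ ℓ, w ℓ ≠ 0)
    (hinj : Function.Injective w) (hprod : ∀ ℓ j, w ℓ * w j ≠ 1)
    (τ : Fin m → ℕ) (hτ : ∀ ℓ, 1 ≤ τ ℓ) (μ : ℕ) (hμ : μ = ∑ ℓ, τ ℓ) (hμ1 : 1 ≤ μ)
    (e : ℤ → ℂ)
    (hsym : ∀ z : ℂ, z ≠ 0 →
      (∑ j ∈ Finset.Icc (1-(μ:ℤ)) ((μ:ℤ)-1), e j * z ^ j)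
        = ∑ j ∈ Finset.Icc (1-(μ:ℤ)) ((μ:ℤ)-1), e j * (z⁻¹) ^ j)
    (hvan : ∀ ℓ, ∀ s < τ ℓ,
      iteratedDeriv s (fun z : ℂ => ∑ j ∈ Finset.Icc (1-(μ:ℤ)) ((μ:ℤ)-1), e j * z ^ j)
        (w ℓ) = 0) :
    ∀ j ∈ Finset.Icc (1-(μ:ℤ)) ((μ:ℤ)-1), e j = 0 := by
  have hν : ((μ - 1 : ℕ) : ℤ) = (μ:ℤ) - 1 := by omega
  set ν : ℕ := μ - 1 with hνdef
  set g : ℂ → ℂ := fun z : ℂ => ∑ j ∈ Finset.Icc (1-(μ:ℤ)) ((μ:ℤ)-1), e j * z ^ j with hgdef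
  have hgsm : ContDiffOn ℂ ⊤ g {(0:ℂ)}ᶜ := contDiffOn_laurent e _
  set D : Polynomial ℂ :=
    ∑ j ∈ Finset.Icc (1-(μ:ℤ)) ((μ:ℤ)-1), Polynomial.C (e j) * Polynomial.X ^ (j + ν).toNat
    with hDdef
  have heval : ∀ z : ℂ, z ≠ 0 → D.eval z = g z * z ^ ν := by
    intro z hz
    rw [hDdef, Polynomial.eval_finset_sum, hgdef, Finset.sum_mul]
    refine Finset.sum_congr rfl fun j hj => ?_
    rw [Finset.mem_Icc] at hj
    rw [Polynomial.eval_mul, Polynomial.eval_C, Polynomial.eval_pow, Polynomial.eval_X]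
    have h1 : (0:ℤ) ≤ j + (ν:ℤ) := by omega
    have h2 : z ^ ((j + (ν:ℤ)).toNat) = z ^ j * z ^ (ν:ℕ) := by
      rw [← zpow_natCast z ((j + (ν:ℤ)).toNat), Int.toNat_of_nonneg h1,
        ← zpow_natCast z ν, zpow_add₀ hz]
    rw [h2, mul_assoc]
  have hdegle : D.natDegree ≤ 2*ν := by
    rw [hDdef]
    refine natDegree_sum_le_of_forall_le _ _ fun j hj => ?_
    rw [Finset.mem_Icc] at hj
    refine (Polynomial.natDegree_C_mul_X_pow_le _ _).trans ?_
    omega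
  have hvanD : ∀ ℓ, ∀ s < τ ℓ, iteratedDeriv s (fun z => D.eval z) (w ℓ) = 0 := by
    intro ℓ s hs
    have hev : (fun z => D.eval z) =ᶠ[𝓝 (w ℓ)] fun z => g z * z ^ ν := by
      filter_upwards [isOpen_compl_singleton.mem_nhds
        (show w ℓ ∈ {(0:ℂ)}ᶜ from hw0 ℓ)] with z hz
      exact heval z hz
    rw [hev.iteratedDeriv_eq]
    exact vanish_mul isOpen_compl_singleton (τ ℓ) g (fun z => z ^ ν) hgsm
      ((contDiff_id.pow ν).contDiffOn) (hw0 ℓ) (hvan ℓ) s hs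
  have hvanDinv : ∀ ℓ, ∀ s < τ ℓ, iteratedDeriv s (fun z => D.eval z) ((w ℓ)⁻¹) = 0 := by
    intro ℓ s hs
    have hinv0 : (w ℓ)⁻¹ ≠ 0 := inv_ne_zero (hw0 ℓ)
    have h1 : ∀ k < τ ℓ, iteratedDeriv k (fun z => D.eval z⁻¹) ((w ℓ)⁻¹) = 0 := by
      refine vanish_inv (s := {(0:ℂ)}ᶜ) isOpen_compl_singleton (τ ℓ) (fun z => D.eval z)
        ((contDiff_polyeval D).contDiffOn) hinv0 ?_ ?_
      · rw [inv_inv]; exact hw0 ℓ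
      · intro k hk; rw [inv_inv]; exact hvanD ℓ k hk
    have hev : (fun z => D.eval z) =ᶠ[𝓝 ((w ℓ)⁻¹)]
        fun z => (D.eval z⁻¹) * z ^ (2*ν) := by
      filter_upwards [isOpen_compl_singleton.mem_nhds
        (show (w ℓ)⁻¹ ∈ {(0:ℂ)}ᶜ from hinv0)] with z hz
      have hz0 : z ≠ 0 := hz
      have hzi : z⁻¹ ≠ 0 := inv_ne_zero hz0
      rw [heval z hz0, heval z⁻¹ hzi]
      have hgsymm : g z⁻¹ = g z := (hsym z hz0).symm
      rw [hgsymm]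
      have h3 : ((z⁻¹ : ℂ)) ^ ν * z ^ (2*ν) = z ^ ν := by
        rw [inv_pow, two_mul, pow_add, ← mul_assoc,
          inv_mul_cancel₀ (pow_ne_zero _ hz0), one_mul]
      rw [mul_assoc, h3]
    rw [hev.iteratedDeriv_eq]
    refine vanish_mul isOpen_compl_singleton (τ ℓ) (fun z => D.eval z⁻¹)
      (fun z => z ^ (2*ν)) ?_ ((contDiff_id.pow (2*ν)).contDiffOn) hinv0 h1 s hs
    exact (contDiff_polyeval D).comp_contDiffOn (contDiffOn_inv ℂ)
  have hqinj : Function.Injective (Sum.elim w fun ℓ => (w ℓ)⁻¹) := by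
    rintro (a|a) (b|b) hab <;> simp only [Sum.elim_inl, Sum.elim_inr] at hab
    · exact congrArg Sum.inl (hinj hab)
    · exfalso; apply hprod a b; rw [hab]; exact inv_mul_cancel₀ (hw0 b)
    · exfalso; apply hprod b a; rw [← hab]; exact inv_mul_cancel₀ (hw0 a)
    · exact congrArg Sum.inr (hinj (inv_injective hab))
  have hsum2 : (∑ i : Fin m ⊕ Fin m, Sum.elim τ τ i) = 2*μ := by
    rw [Fintype.sum_sum_type]
    simp only [Sum.elim_inl, Sum.elim_inr]
    rw [hμ, two_mul]
  have hzero : D = 0 := by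
    refine core_poly (Sum.elim w fun ℓ => (w ℓ)⁻¹) hqinj (Sum.elim τ τ)
      (by rintro (a|a) <;> exact hτ a) D (by omega) ?_
    rintro (ℓ|ℓ) s hs <;> simp only [Sum.elim_inl, Sum.elim_inr] <;> rw [← itd_poly]
    · exact hvanD ℓ s hs
    · exact hvanDinv ℓ s hs
  intro j hj
  have hco : D.coeff ((j + (ν:ℤ)).toNat) = e j := by
    rw [hDdef, Polynomial.finset_sum_coeff]
    rw [Finset.sum_eq_single j]
    · rw [Polynomial.coeff_C_mul, Polynomial.coeff_X_pow, if_pos rfl, mul_one]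
    · intro j' hj' hne
      rw [Polynomial.coeff_C_mul, Polynomial.coeff_X_pow, if_neg, mul_zero]
      intro hEq
      apply hne
      rw [Finset.mem_Icc] at hj hj'
      have h5 := congrArg (fun n : ℕ => (n:ℤ)) hEq
      rw [Int.toNat_of_nonneg (by omega), Int.toNat_of_nonneg (by omega)] at h5
      omega
    · intro hjnot; exact absurd hj hjnot
  rw [hzero, Polynomial.coeff_zero] at hco
  exact hco.symm


/-- Existence and uniqueness of the minimally supported symmetric polynomial correction:
given an odd-symmetric Laurent polynomial `B` nonvanishing at suitable nodes `w_ℓ`,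
there is a unique odd-symmetric Laurent polynomial `c` supported in `[1-μ, μ-1]`,
`μ = τ_1 + ⋯ + τ_m`, with `c^{(s)}(w_ℓ) = 2·(1/B)^{(s)}(w_ℓ)` for `s < τ_ℓ`; moreover
this `c` satisfies the same conditions at the points `w_ℓ⁻¹`. -/
theorem symmetric_correction_exists_unique (B : ℂ → ℂ)
    (hBl : ∃ (b : ℤ → ℂ) (s : Finset ℤ), ∀ z : ℂ, z ≠ 0 → B z = ∑ j ∈ s, b j * z ^ j)
    (hBsym : ∀ z : ℂ, z ≠ 0 → B z = B z⁻¹)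
    (m : ℕ) (hm : 1 ≤ m) (w : Fin m → ℂ)
    (hw0 : ∀ ℓ, w ℓ ≠ 0) (hw1 : ∀ ℓ, w ℓ ≠ 1) (hwm1 : ∀ ℓ, w ℓ ≠ -1)
    (hinj : Function.Injective w)
    (hprod : ∀ ℓ j, w ℓ * w j ≠ 1)
    (τ : Fin m → ℕ) (hτ : ∀ ℓ, 1 ≤ τ ℓ)
    (μ : ℕ) (hμ : μ = ∑ ℓ, τ ℓ)
    (hBw : ∀ ℓ, B (w ℓ) ≠ 0) :
    ∃ c : ℂ → ℂ,
      ((∃ co : ℤ → ℂ, ∀ z : ℂ, z ≠ 0 →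
          c z = ∑ j ∈ Finset.Icc (1 - (μ : ℤ)) ((μ : ℤ) - 1), co j * z ^ j) ∧
       (∀ z : ℂ, z ≠ 0 → c z = c z⁻¹) ∧
       (∀ ℓ, ∀ s < τ ℓ, iteratedDeriv s c (w ℓ) =
          2 * iteratedDeriv s (fun z => (B z)⁻¹) (w ℓ))) ∧
      (∀ ℓ, ∀ s < τ ℓ, iteratedDeriv s c ((w ℓ)⁻¹) =
          2 * iteratedDeriv s (fun z => (B z)⁻¹) ((w ℓ)⁻¹)) ∧
      (∀ c' : ℂ → ℂ,
        (∃ co' : ℤ → ℂ, ∀ z : ℂ, z ≠ 0 →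
            c' z = ∑ j ∈ Finset.Icc (1 - (μ : ℤ)) ((μ : ℤ) - 1), co' j * z ^ j) →
        (∀ z : ℂ, z ≠ 0 → c' z = c' z⁻¹) →
        (∀ ℓ, ∀ s < τ ℓ, iteratedDeriv s c' (w ℓ) =
            2 * iteratedDeriv s (fun z => (B z)⁻¹) (w ℓ)) →
        ∀ z : ℂ, z ≠ 0 → c' z = c z) := by
  obtain ⟨b, sB, hBrep⟩ := hBl
  have hμ1 : 1 ≤ μ := by
    rw [hμ]
    have : (0:ℕ) < ∑ ℓ, τ ℓ :=
      Finset.sum_pos (fun i _ => hτ i) ⟨⟨0, hm⟩, Finset.mem_univ _⟩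
    omega
  set a' : (Fin μ → ℂ) → ℤ → ℂ :=
    fun a j => if h : j.natAbs < μ then a ⟨j.natAbs, h⟩ else 0 with ha'def
  set F : (Fin μ → ℂ) → ℂ → ℂ :=
    fun a z => ∑ j ∈ Finset.Icc (1-(μ:ℤ)) ((μ:ℤ)-1), a' a j * z ^ j with hFdef
  have hFsm : ∀ a, ContDiffOn ℂ ⊤ (F a) {(0:ℂ)}ᶜ := fun a => contDiffOn_laurent _ _
  have ha'neg : ∀ a j, a' a (-j) = a' a j := by
    intro a j
    rw [ha'def]
    simp only [Int.natAbs_neg]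
  have hFsymm : ∀ a, ∀ z : ℂ, z ≠ 0 → F a z = F a z⁻¹ := by
    intro a z hz
    exact laurent_symm (a' a) (ha'neg a) μ hz
  have hadd : ∀ (u v : Fin μ → ℂ), F (u + v) = fun z => F u z + F v z := by
    intro u v
    funext z
    rw [hFdef]
    simp only
    rw [← Finset.sum_add_distrib]
    refine Finset.sum_congr rfl fun j _ => ?_
    have : a' (u + v) j = a' u j + a' v j := by
      rw [ha'def]; simp only
      split
      · simp
      · simp
    rw [this, add_mul]
  have hsmul : ∀ (r : ℂ) (u : Fin μ → ℂ), F (r • u) = fun z => r * F u z := by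
    intro r u
    funext z
    rw [hFdef]
    simp only
    rw [Finset.mul_sum]
    refine Finset.sum_congr rfl fun j _ => ?_
    have : a' (r • u) j = r * a' u j := by
      rw [ha'def]; simp only
      split
      · simp
      · simp
    rw [this, mul_assoc]
  let T : (Fin μ → ℂ) →ₗ[ℂ] ((Σ ℓ : Fin m, Fin (τ ℓ)) → ℂ) :=
    { toFun := fun a p => iteratedDeriv p.2 (F a) (w p.1)
      map_add' := by
        intro u v
        funext p
        show iteratedDeriv (p.2 : ℕ) (F (u + v)) (w p.1)
          = iteratedDeriv (p.2 : ℕ) (F u) (w p.1) + iteratedDeriv (p.2 : ℕ) (F v) (w p.1)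
        rw [hadd u v,
          itd_add isOpen_compl_singleton (hw0 p.1) ((hFsm u).of_le le_top)
            ((hFsm v).of_le le_top)]
      map_smul' := by
        intro r u
        funext p
        show iteratedDeriv (p.2 : ℕ) (F (r • u)) (w p.1)
          = r * iteratedDeriv (p.2 : ℕ) (F u) (w p.1)
        rw [hsmul r u,
          itd_const_mul isOpen_compl_singleton (hw0 p.1) r ((hFsm u).of_le le_top)] }
  have hTapp : ∀ (a : Fin μ → ℂ) (p : Σ ℓ : Fin m, Fin (τ ℓ)),
      T a p = iteratedDeriv p.2 (F a) (w p.1) := fun a p => rfl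
  have hTinj : Function.Injective T := by
    rw [← LinearMap.ker_eq_bot]
    refine (Submodule.eq_bot_iff _).mpr fun a ha => ?_
    rw [LinearMap.mem_ker] at ha
    have hvan : ∀ ℓ, ∀ s, ∀ hs : s < τ ℓ, iteratedDeriv s (F a) (w ℓ) = 0 := by
      intro ℓ s hs
      have := congrFun ha ⟨ℓ, ⟨s, hs⟩⟩
      rw [hTapp] at this
      exact this
    have hcoef := core_fun m w hw0 hinj hprod τ hτ μ hμ hμ1 (a' a)
      (fun z hz => laurent_symm (a' a) (ha'neg a) μ hz)
      (fun ℓ s hs => hvan ℓ s hs)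
    funext i
    have hmem : (i : ℤ) ∈ Finset.Icc (1-(μ:ℤ)) ((μ:ℤ)-1) := by
      rw [Finset.mem_Icc]
      have := i.isLt
      omega
    have h6 := hcoef (i : ℤ) hmem
    rw [ha'def] at h6
    simp only [Int.natAbs_natCast] at h6
    rw [dif_pos i.isLt] at h6
    simpa using h6
  have hdim : Module.finrank ℂ (Fin μ → ℂ)
      = Module.finrank ℂ ((Σ ℓ : Fin m, Fin (τ ℓ)) → ℂ) := by
    rw [Module.finrank_pi, Module.finrank_pi]
    simp [Fintype.card_sigma, hμ]
  have hTsurj : Function.Surjective T :=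
    (LinearMap.injective_iff_surjective_of_finrank_eq_finrank hdim).mp hTinj
  obtain ⟨a, haT⟩ :=
    hTsurj (fun p => 2 * iteratedDeriv p.2 (fun z => (B z)⁻¹) (w p.1))
  have hcond : ∀ ℓ, ∀ s, ∀ hs : s < τ ℓ, iteratedDeriv s (F a) (w ℓ)
      = 2 * iteratedDeriv s (fun z => (B z)⁻¹) (w ℓ) := by
    intro ℓ s hs
    have := congrFun haT ⟨ℓ, ⟨s, hs⟩⟩
    rw [hTapp] at this
    exact this
  -- the symmetric Laurent representation of B
  set B' : ℂ → ℂ := fun z => ∑ j ∈ sB, b j * z ^ j with hB'def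
  have hB'sm : ContDiffOn ℂ ⊤ B' {(0:ℂ)}ᶜ := contDiffOn_laurent b sB
  have hB'w : ∀ ℓ, B' (w ℓ) ≠ 0 := fun ℓ => by
    have hh : B' (w ℓ) = B (w ℓ) := (hBrep _ (hw0 ℓ)).symm
    rw [hh]; exact hBw ℓ
  have hB'winv : ∀ ℓ, B' ((w ℓ)⁻¹) ≠ 0 := fun ℓ => by
    have hh : B' ((w ℓ)⁻¹) = B ((w ℓ)⁻¹) := (hBrep _ (inv_ne_zero (hw0 ℓ))).symm
    rw [hh, ← hBsym (w ℓ) (hw0 ℓ)]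
    exact hBw ℓ
  set U : Set ℂ := {(0:ℂ)}ᶜ ∩ B' ⁻¹' {(0:ℂ)}ᶜ with hUdef
  have hUopen : IsOpen U :=
    hB'sm.continuousOn.isOpen_inter_preimage isOpen_compl_singleton isOpen_compl_singleton
  have hwU : ∀ ℓ, w ℓ ∈ U := fun ℓ => ⟨hw0 ℓ, hB'w ℓ⟩
  have hwinvU : ∀ ℓ, (w ℓ)⁻¹ ∈ U := fun ℓ => ⟨inv_ne_zero (hw0 ℓ), hB'winv ℓ⟩
  have hinvsm : ContDiffOn ℂ ⊤ (fun z => (B' z)⁻¹) U :=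
    (hB'sm.mono Set.inter_subset_left).inv fun z hz => hz.2
  set h : ℂ → ℂ := fun z => F a z - 2 * (B' z)⁻¹ with hhdef
  have hhsm : ContDiffOn ℂ ⊤ h U :=
    ((hFsm a).mono Set.inter_subset_left).sub (contDiffOn_const.mul hinvsm)
  have hBinv_ev : ∀ x : ℂ, x ≠ 0 →
      (fun z => (B z)⁻¹) =ᶠ[𝓝 x] fun z => (B' z)⁻¹ := by
    intro x hx
    filter_upwards [isOpen_compl_singleton.mem_nhds
      (show x ∈ {(0:ℂ)}ᶜ from hx)] with z hz
    rw [hBrep z hz]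
  have hvanh : ∀ ℓ, ∀ s, ∀ hs : s < τ ℓ, iteratedDeriv s h (w ℓ) = 0 := by
    intro ℓ s hs
    rw [hhdef]
    rw [itd_sub hUopen (hwU ℓ) (((hFsm a).mono Set.inter_subset_left).of_le le_top)
      ((contDiffOn_const.mul hinvsm).of_le le_top),
      itd_const_mul hUopen (hwU ℓ) 2 (hinvsm.of_le le_top)]
    rw [(hBinv_ev (w ℓ) (hw0 ℓ)).symm.iteratedDeriv_eq s, hcond ℓ s hs, sub_self]
  have hsymmh : ∀ z : ℂ, z ≠ 0 → h z = h z⁻¹ := by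
    intro z hz
    rw [hhdef]
    simp only
    rw [hFsymm a z hz]
    have hBB : B' z = B' z⁻¹ := by
      have e1 : B' z = B z := (hBrep z hz).symm
      have e2 : B' z⁻¹ = B z⁻¹ := (hBrep z⁻¹ (inv_ne_zero hz)).symm
      rw [e1, e2]; exact hBsym z hz
    rw [hBB]
  refine ⟨F a, ⟨⟨a' a, fun z hz => rfl⟩, hFsymm a, fun ℓ s hs => hcond ℓ s hs⟩, ?_, ?_⟩
  · -- conditions at the inverse points
    intro ℓ s hs
    have h2 : ∀ k < τ ℓ, iteratedDeriv k (fun z => h z⁻¹) ((w ℓ)⁻¹) = 0 := by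
      refine vanish_inv (s := U) hUopen (τ ℓ) h hhsm (inv_ne_zero (hw0 ℓ)) ?_ ?_
      · rw [inv_inv]; exact hwU ℓ
      · intro k hk; rw [inv_inv]; exact hvanh ℓ k hk
    have h3 : iteratedDeriv s h ((w ℓ)⁻¹) = 0 := by
      have hev : h =ᶠ[𝓝 ((w ℓ)⁻¹)] fun z => h z⁻¹ := by
        filter_upwards [isOpen_compl_singleton.mem_nhds
          (show (w ℓ)⁻¹ ∈ {(0:ℂ)}ᶜ from inv_ne_zero (hw0 ℓ))] with z hz
        exact hsymmh z hz
      rw [hev.iteratedDeriv_eq]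
      exact h2 s hs
    rw [hhdef] at h3
    rw [itd_sub hUopen (hwinvU ℓ) (((hFsm a).mono Set.inter_subset_left).of_le le_top)
      ((contDiffOn_const.mul hinvsm).of_le le_top),
      itd_const_mul hUopen (hwinvU ℓ) 2 (hinvsm.of_le le_top)] at h3
    rw [(hBinv_ev ((w ℓ)⁻¹) (inv_ne_zero (hw0 ℓ))).iteratedDeriv_eq s]
    exact sub_eq_zero.mp h3
  · -- uniqueness
    intro c' hrep' hsym' hcond' z hz
    obtain ⟨co', hco'⟩ := hrep'
    set e' : ℤ → ℂ := fun j => co' j - a' a j with he'def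
    have heq : (fun y : ℂ => ∑ j ∈ Finset.Icc (1-(μ:ℤ)) ((μ:ℤ)-1), e' j * y ^ j)
        = fun y => (∑ j ∈ Finset.Icc (1-(μ:ℤ)) ((μ:ℤ)-1), co' j * y ^ j) - F a y := by
      funext y
      rw [hFdef]
      simp only
      rw [← Finset.sum_sub_distrib]
      refine Finset.sum_congr rfl fun j _ => ?_
      rw [he'def, sub_mul]
    have hsum_e : ∀ y : ℂ, y ≠ 0 →
        (∑ j ∈ Finset.Icc (1-(μ:ℤ)) ((μ:ℤ)-1), e' j * y ^ j) = c' y - F a y := by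
      intro y hy
      rw [congrFun heq y, hco' y hy]
    have hsym_e : ∀ y : ℂ, y ≠ 0 →
        (∑ j ∈ Finset.Icc (1-(μ:ℤ)) ((μ:ℤ)-1), e' j * y ^ j)
          = ∑ j ∈ Finset.Icc (1-(μ:ℤ)) ((μ:ℤ)-1), e' j * (y⁻¹) ^ j := by
      intro y hy
      rw [hsum_e y hy]
      have := hsum_e y⁻¹ (inv_ne_zero hy)
      rw [this, hsym' y hy, hFsymm a y hy]
    have hvan_e : ∀ ℓ, ∀ s, ∀ hs : s < τ ℓ,
        iteratedDeriv s
          (fun y : ℂ => ∑ j ∈ Finset.Icc (1-(μ:ℤ)) ((μ:ℤ)-1), e' j * y ^ j) (w ℓ) = 0 := by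
      intro ℓ s hs
      rw [heq]
      rw [itd_sub isOpen_compl_singleton (hw0 ℓ)
        ((contDiffOn_laurent co' _).of_le le_top) ((hFsm a).of_le le_top)]
      have h5 : iteratedDeriv s
          (fun y : ℂ => ∑ j ∈ Finset.Icc (1-(μ:ℤ)) ((μ:ℤ)-1), co' j * y ^ j) (w ℓ)
          = iteratedDeriv s c' (w ℓ) := by
        refine Filter.EventuallyEq.iteratedDeriv_eq s ?_
        filter_upwards [isOpen_compl_singleton.mem_nhds
          (show w ℓ ∈ {(0:ℂ)}ᶜ from hw0 ℓ)] with y hy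
        exact (hco' y hy).symm
      rw [h5, hcond' ℓ s hs, hcond ℓ s hs, sub_self]
    have hcoef := core_fun m w hw0 hinj hprod τ hτ μ hμ hμ1 e' hsym_e
      (fun ℓ s hs => hvan_e ℓ s hs)
    rw [hco' z hz]
    have : (∑ j ∈ Finset.Icc (1-(μ:ℤ)) ((μ:ℤ)-1), co' j * z ^ j) = F a z := by
      rw [hFdef]
      simp only
      refine Finset.sum_congr rfl fun j hj => ?_
      have h7 := hcoef j hj
      rw [he'def] at h7
      simp only at h7
      rw [sub_eq_zero] at h7
      rw [h7]
    rw [this]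
end

section
/- Let ρ ≥ 1 be an integer, N = 2ρ, and let M be an even integer with 2 ≤ M ≤ N. Define, for z ∈ ℂ∖{0}, B_N(z) := 2^{−(N−1)}·z^{−ρ}·(z+1)^N, δ(z) := −(1−z)²/(4z), and c_M(z) := Σ_{s=0}^{⌊(M−1)/2⌋} binom(ρ+s−1, s)·δ(z)^s. Then the product a(z) := B_N(z)·c_M(z) satisfies a(1) = 2 and, for every s = 1, …, M−1, the s-th complex derivative of a at 1 equals 0. Consequently a(z) = 2·σ(z)^ρ·Σ_{s=0}^{⌊(M−1)/2⌋} binom(ρ+s−1, s)·δ(z)^s with σ(z) := (1+z)²/(4z), which is the symbol of the binary (primal) pseudo-spline with parameters (M, N). -/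
open Finset

open Topology

lemma aux_poly (ρ K : ℕ) (hρ : 1 ≤ ρ) :
    ∃ q : Polynomial ℂ,
      (1 - Polynomial.X) ^ ρ *
        ∑ s ∈ range (K + 1), Polynomial.C (((ρ + s - 1).choose s : ℕ) : ℂ) * Polynomial.X ^ s
      = 1 + Polynomial.X ^ (K + 1) * q := by
  set S : Polynomial ℂ :=
    ∑ s ∈ range (K + 1), Polynomial.C (((ρ + s - 1).choose s : ℕ) : ℂ) * Polynomial.X ^ s with hS
  set T : PowerSeries ℂ := (PowerSeries.invOneSubPow ℂ ρ).val with hT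
  have hTmul : (1 - PowerSeries.X : PowerSeries ℂ) ^ ρ * T = 1 := by
    have := (PowerSeries.invOneSubPow ℂ ρ).inv_val
    rwa [PowerSeries.invOneSubPow_inv_eq_one_sub_pow] at this
  have hTcoeff : ∀ j : ℕ, PowerSeries.coeff j T = (((ρ + j - 1).choose j : ℕ) : ℂ) := by
    intro j
    rw [hT, PowerSeries.invOneSubPow_val_eq_mk_sub_one_add_choose_of_pos _ _ hρ]
    rw [PowerSeries.coeff_mk]
    congr 1
    have h1 : ρ - 1 + j = ρ + j - 1 := by omega
    rw [h1, show ρ - 1 = (ρ + j - 1) - j by omega, Nat.choose_symm (by omega)]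
  have hScoeff : ∀ j : ℕ, j ≤ K → S.coeff j = (((ρ + j - 1).choose j : ℕ) : ℂ) := by
    intro j hj
    rw [hS, Polynomial.finset_sum_coeff]
    simp only [Polynomial.coeff_C_mul, Polynomial.coeff_X_pow, mul_ite, mul_one, mul_zero]
    rw [Finset.sum_ite_eq (range (K + 1)) j]
    simp [Nat.lt_succ_of_le hj]
  have key : ∀ d, d ≤ K → ((1 - Polynomial.X : Polynomial ℂ) ^ ρ * S).coeff d
      = PowerSeries.coeff d ((1 - PowerSeries.X : PowerSeries ℂ) ^ ρ * T) := by
    intro d hd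
    rw [Polynomial.coeff_mul, PowerSeries.coeff_mul]
    refine Finset.sum_congr rfl fun p hp => ?_
    rw [Finset.HasAntidiagonal.mem_antidiagonal] at hp
    have hp2 : p.2 ≤ K := le_trans (by omega) hd
    congr 1
    · have : ((((1 - Polynomial.X : Polynomial ℂ) ^ ρ : Polynomial ℂ) : PowerSeries ℂ))
          = (1 - PowerSeries.X : PowerSeries ℂ) ^ ρ := by
        rw [Polynomial.coe_pow, Polynomial.coe_sub, Polynomial.coe_one, Polynomial.coe_X]
      rw [← this, Polynomial.coeff_coe]
    · rw [hScoeff p.2 hp2, hTcoeff p.2]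
  have hdvd : Polynomial.X ^ (K + 1) ∣ ((1 - Polynomial.X : Polynomial ℂ) ^ ρ * S - 1) := by
    rw [Polynomial.X_pow_dvd_iff]
    intro d hd
    rw [Polynomial.coeff_sub, key d (by omega), hTmul]
    simp [Polynomial.coeff_one, PowerSeries.coeff_one]
  obtain ⟨q, hq⟩ := hdvd
  exact ⟨q, by linear_combination hq⟩



lemma aux_deriv_factor {H : ℂ → ℂ} {j : ℕ} (hj : 1 ≤ j) {z : ℂ}
    (hH : DifferentiableAt ℂ H z) :
    deriv (fun w => (w - 1) ^ j * H w) z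
      = (z - 1) ^ (j - 1) * ((j : ℂ) * H z + (z - 1) * deriv H z) := by
  have hp : DifferentiableAt ℂ (fun w : ℂ => (w - 1) ^ j) z :=
    (differentiableAt_id.sub_const 1).pow j
  rw [deriv_fun_mul hp hH]
  have hd : deriv (fun w : ℂ => (w - 1) ^ j) z = (j : ℂ) * (z - 1) ^ (j - 1) := by
    have h' : HasDerivAt (fun w : ℂ => (w - 1) ^ j) ((j : ℂ) * (z - 1) ^ (j - 1) * 1) z :=
      (((hasDerivAt_id z).sub_const 1).pow j)
    simp only [mul_one] at h'
    exact h'.deriv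
  rw [hd]
  have : (z - 1) ^ j = (z - 1) ^ (j - 1) * (z - 1) := by
    rw [← pow_succ, Nat.sub_add_cancel hj]
  rw [this]; ring

lemma aux_iteratedDeriv_zero {h : ℂ → ℂ} {U : Set ℂ} (hU : IsOpen U) (h1 : (1 : ℂ) ∈ U)
    (hh : AnalyticOnNhd ℂ h U) (M : ℕ) (c : ℂ) (s : ℕ) (hs1 : 1 ≤ s) (hsM : s < M) :
    iteratedDeriv s (fun z => c + (z - 1) ^ M * h z) 1 = 0 := by
  have hUev : ∀ᶠ z in 𝓝 (1 : ℂ), z ∈ U := hU.mem_nhds h1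
  have key : ∀ k : ℕ, 1 ≤ k → k ≤ M → ∃ H : ℂ → ℂ, AnalyticOnNhd ℂ H U ∧
      iteratedDeriv k (fun z => c + (z - 1) ^ M * h z)
        =ᶠ[𝓝 (1 : ℂ)] fun z => (z - 1) ^ (M - k) * H z := by
    intro k
    induction k with
    | zero => omega
    | succ k ih =>
      intro _ hkM
      rcases Nat.eq_or_lt_of_le (Nat.one_le_iff_ne_zero.mpr (Nat.succ_ne_zero k)) with hk1 | hk1
      · -- k + 1 = 1
        have hk0 : k = 0 := by omega
        subst hk0
        refine ⟨fun z => (M : ℂ) * h z + (z - 1) * deriv h z,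
          (analyticOnNhd_const.mul hh).add
            ((analyticOnNhd_id.sub analyticOnNhd_const).mul hh.deriv), ?_⟩
        rw [iteratedDeriv_one]
        filter_upwards [hUev] with z hz
        rw [deriv_const_add, aux_deriv_factor (by omega) (hh z hz).differentiableAt]
      · -- step
        obtain ⟨H, hH, heq⟩ := ih (by omega) (by omega)
        refine ⟨fun z => ((M - k : ℕ) : ℂ) * H z + (z - 1) * deriv H z,
          (analyticOnNhd_const.mul hH).add
            ((analyticOnNhd_id.sub analyticOnNhd_const).mul hH.deriv), ?_⟩
        rw [iteratedDeriv_succ]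
        have := heq.deriv
        filter_upwards [this, hUev] with z hz hzU
        rw [hz, aux_deriv_factor (by omega) (hH z hzU).differentiableAt,
          show M - k - 1 = M - (k + 1) by omega]
  obtain ⟨H, hH, heq⟩ := key s hs1 (le_of_lt hsM)
  have := heq.eq_of_nhds
  rw [this]
  simp only [sub_self]
  rw [zero_pow (by omega), zero_mul]


/-- The product of the (shifted) order-`N` B-spline symbol with the correction
`c_M(z) = Σ_s binom(ρ+s-1,s) δ(z)^s` satisfies the polynomial reproduction conditions at
`1` with shift `p = 0` up to order `M-1`, and equals the primal pseudo-spline symbol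
`2 σ(z)^ρ Σ_s binom(ρ+s-1,s) δ(z)^s`. -/
theorem primal_pseudoSpline_symbol (ρ : ℕ) (hρ : 1 ≤ ρ) (N : ℕ) (hN : N = 2 * ρ)
    (M : ℕ) (hM2 : 2 ≤ M) (hMN : M ≤ N) (hMeven : Even M)
    (a : ℂ → ℂ)
    (ha : ∀ z : ℂ, a z =
      ((2 : ℂ) ^ (N - 1))⁻¹ * z ^ (-(ρ : ℤ)) * (z + 1) ^ N *
        ∑ s ∈ range ((M - 1) / 2 + 1),
          (((ρ + s - 1).choose s : ℕ) : ℂ) * (-((1 - z) ^ 2 / (4 * z))) ^ s) :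
    a 1 = 2 ∧
    (∀ s : ℕ, 1 ≤ s → s ≤ M - 1 → iteratedDeriv s a 1 = 0) ∧
    (∀ z : ℂ, z ≠ 0 → a z =
      2 * ((1 + z) ^ 2 / (4 * z)) ^ ρ *
        ∑ s ∈ range ((M - 1) / 2 + 1),
          (((ρ + s - 1).choose s : ℕ) : ℂ) * (-((1 - z) ^ 2 / (4 * z))) ^ s) := by
  have hN2 : 2 ≤ N := le_trans hM2 hMN
  -- the prefactor identity
  have hfac : ∀ z : ℂ, z ≠ 0 →
      ((2 : ℂ) ^ (N - 1))⁻¹ * z ^ (-(ρ : ℤ)) * (z + 1) ^ N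
        = 2 * ((1 + z) ^ 2 / (4 * z)) ^ ρ := by
    intro z hz
    have h2p : (2 : ℂ) ^ (N - 1) ≠ 0 := pow_ne_zero _ two_ne_zero
    have hzρ : z ^ ρ ≠ 0 := pow_ne_zero _ hz
    have h4z : (4 : ℂ) * z ≠ 0 := by
      simp [hz]
    rw [zpow_neg, zpow_natCast, div_pow, mul_pow]
    have h4 : (4 : ℂ) ^ ρ = 2 ^ N := by
      rw [show (4 : ℂ) = 2 ^ 2 by norm_num, ← pow_mul, hN]
    have hNsucc : (2 : ℂ) ^ N = 2 ^ (N - 1) * 2 := by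
      rw [← pow_succ, show N - 1 + 1 = N by omega]
    have h1z : ((1 + z) ^ 2) ^ ρ = (z + 1) ^ N := by
      rw [← pow_mul, hN, add_comm]
    rw [h4, h1z, hNsucc]
    field_simp
  -- part 3
  have hpart3 : ∀ z : ℂ, z ≠ 0 → a z =
      2 * ((1 + z) ^ 2 / (4 * z)) ^ ρ *
        ∑ s ∈ range ((M - 1) / 2 + 1),
          (((ρ + s - 1).choose s : ℕ) : ℂ) * (-((1 - z) ^ 2 / (4 * z))) ^ s := by
    intro z hz
    rw [ha z, hfac z hz]
  -- part 1
  have hpart1 : a 1 = 2 := by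
    rw [ha 1]
    have hsum : ∑ s ∈ range ((M - 1) / 2 + 1),
        (((ρ + s - 1).choose s : ℕ) : ℂ) * (-((1 - (1:ℂ)) ^ 2 / (4 * 1))) ^ s = 1 := by
      rw [Finset.sum_eq_single 0]
      · norm_num
      · intro b _ hb
        norm_num [zero_pow hb]
      · intro habs
        exact absurd (Finset.mem_range.mpr (Nat.succ_pos _)) habs
    rw [hsum]
    rw [show ((1:ℂ) + 1) = 2 by norm_num, show N = (N - 1) + 1 by omega, pow_succ]
    have h2p : (2 : ℂ) ^ (N - 1) ≠ 0 := pow_ne_zero _ two_ne_zero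
    field_simp
    rw [one_zpow, one_mul, Nat.add_sub_cancel]
  -- part 2
  refine ⟨hpart1, ?_, hpart3⟩
  set K : ℕ := (M - 1) / 2 with hKdef
  have hMK : M = 2 * (K + 1) := by
    obtain ⟨t, ht⟩ := hMeven
    omega
  obtain ⟨q, hq⟩ := aux_poly ρ K hρ
  set h : ℂ → ℂ := fun z =>
    2 * Polynomial.eval (-((1 - z) ^ 2 / (4 * z))) q * (-(4 * z))⁻¹ ^ (K + 1) with hhdef
  have haG : ∀ z : ℂ, z ≠ 0 → a z = 2 + (z - 1) ^ M * h z := by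
    intro z hz
    have h4z : (4 : ℂ) * z ≠ 0 := by simp [hz]
    have hn4z : -((4 : ℂ) * z) ≠ 0 := neg_ne_zero.mpr h4z
    rw [hpart3 z hz]
    set w : ℂ := -((1 - z) ^ 2 / (4 * z)) with hwdef
    have hσ : ((1 + z) ^ 2 / (4 * z)) = 1 - w := by
      rw [hwdef]
      field_simp
      ring
    have hsum : ∑ s ∈ range (K + 1),
        (((ρ + s - 1).choose s : ℕ) : ℂ) * w ^ s
        = Polynomial.eval w
            (∑ s ∈ range (K + 1),
              Polynomial.C (((ρ + s - 1).choose s : ℕ) : ℂ) * Polynomial.X ^ s) := by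
      rw [Polynomial.eval_finset_sum]
      simp
    rw [hσ, hsum, show (2 : ℂ) * (1 - w) ^ ρ *
        Polynomial.eval w (∑ s ∈ range (K + 1),
          Polynomial.C (((ρ + s - 1).choose s : ℕ) : ℂ) * Polynomial.X ^ s)
      = 2 * Polynomial.eval w ((1 - Polynomial.X) ^ ρ *
          ∑ s ∈ range (K + 1),
            Polynomial.C (((ρ + s - 1).choose s : ℕ) : ℂ) * Polynomial.X ^ s) by
        simp [mul_assoc]]
    rw [hq]
    simp only [Polynomial.eval_add, Polynomial.eval_one, Polynomial.eval_mul,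
      Polynomial.eval_pow, Polynomial.eval_X]
    have hw : w = (z - 1) ^ 2 * (-(4 * z))⁻¹ := by
      rw [hwdef]
      field_simp
      ring
    have hwpow : w ^ (K + 1) = (z - 1) ^ M * (-(4 * z))⁻¹ ^ (K + 1) := by
      rw [hw, mul_pow, ← pow_mul, show 2 * (K + 1) = M from hMK.symm]
    rw [hwpow, hhdef]
    ring
  have hU : IsOpen {z : ℂ | z ≠ 0} := isOpen_compl_singleton
  have h1mem : (1 : ℂ) ∈ {z : ℂ | z ≠ 0} := one_ne_zero
  have hdiff : DifferentiableOn ℂ h {z : ℂ | z ≠ 0} := by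
    intro z hz
    have hz' : z ≠ 0 := hz
    have h4z : (4 : ℂ) * z ≠ 0 := by simp [hz']
    have hinner : DifferentiableAt ℂ (fun z : ℂ => -((1 - z) ^ 2 / (4 * z))) z :=
      (((((differentiableAt_const (1:ℂ)).sub differentiableAt_id).pow 2).div
        ((differentiableAt_const (4:ℂ)).mul differentiableAt_id) h4z)).neg
    have houter : DifferentiableAt ℂ
        (fun z : ℂ => Polynomial.eval (-((1 - z) ^ 2 / (4 * z))) q) z :=
      DifferentiableAt.comp z (q.differentiableAt) hinner
    have hpow : DifferentiableAt ℂ (fun z : ℂ => (-(4 * z))⁻¹ ^ (K + 1)) z :=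
      ((((differentiableAt_const (4:ℂ)).mul differentiableAt_id).neg).inv
        (neg_ne_zero.mpr h4z)).pow (K + 1)
    exact (((differentiableAt_const (2:ℂ)).mul houter).mul hpow).differentiableWithinAt
  have hh : AnalyticOnNhd ℂ h {z : ℂ | z ≠ 0} := hdiff.analyticOnNhd hU
  have haev : a =ᶠ[𝓝 (1 : ℂ)] fun z => 2 + (z - 1) ^ M * h z := by
    filter_upwards [hU.mem_nhds h1mem] with z hz
    exact haG z hz
  intro s hs1 hsM
  rw [Filter.EventuallyEq.iteratedDeriv_eq s haev]
  exact aux_iteratedDeriv_zero hU h1mem hh M 2 s hs1 (by omega)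
end

section
/- Let ρ ≥ 1 be an integer, N = 2ρ+1, and let M be an odd integer with 1 ≤ M ≤ N. Define, for z ∈ ℂ∖{0}, B_N(z) := 2^{−(N−1)}·z^{−(ρ+1)}·(z+1)^N, δ(z) := −(1−z)²/(4z), and c_M(z) := Σ_{s=0}^{⌊(M−1)/2⌋} b_s·δ(z)^s, where b_s := (1/s!)·∏_{i=0}^{s−1}(ρ − 1/2 + s − i) is the generalized binomial coefficient binom(ρ − 1/2 + s, s). Then the product a(z) := B_N(z)·c_M(z) satisfies, for every s = 0, …, M−1, that the s-th complex derivative of a at 1 equals 2·∏_{i=0}^{s−1}(−1/2 − i). Consequently a(z) = ((z+1)/z)·σ(z)^ρ·Σ_{s=0}^{⌊(M−1)/2⌋} b_s·δ(z)^s with σ(z) := (1+z)²/(4z), which is the symbol of the binary (dual) pseudo-spline with parameters (M, N). -/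
open Finset Topology Filter

open Finset Topology Filter


namespace DualPS

noncomputable def bcoef (ρ : ℕ) (s : ℕ) : ℂ :=
  ((s.factorial : ℂ))⁻¹ * ∏ i ∈ range s, ((ρ : ℂ) - 1 / 2 + (s : ℂ) - (i : ℂ))

lemma bcoef_eq (ρ s : ℕ) :
    bcoef ρ s = ∏ j ∈ range s, (((ρ : ℂ) + 1 / 2 + (j : ℂ)) / ((j : ℂ) + 1)) := by
  rw [bcoef]
  have h1 : (∏ i ∈ range s, ((ρ : ℂ) - 1 / 2 + (s : ℂ) - (i : ℂ)))
      = ∏ j ∈ range s, ((ρ : ℂ) + 1 / 2 + (j : ℂ)) := by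
    rw [← Finset.prod_range_reflect]
    refine Finset.prod_congr rfl fun j hj => ?_
    rw [Finset.mem_range] at hj
    have h2 : ((s - 1 - j : ℕ) : ℂ) = (s : ℂ) - 1 - (j : ℂ) := by
      have : (1 : ℕ) + j ≤ s := by omega
      push_cast [Nat.sub_sub, Nat.cast_sub this]
      ring
    rw [h2]; ring
  have h3 : ((s.factorial : ℕ) : ℂ) = ∏ j ∈ range s, ((j : ℂ) + 1) := by
    rw [← Finset.prod_range_add_one_eq_factorial]
    push_cast
    rfl
  rw [h1, Finset.prod_div_distrib, ← h3, inv_mul_eq_div]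

lemma bcoef_zero (ρ : ℕ) : bcoef ρ 0 = 1 := by simp [bcoef]

lemma bcoef_rec (ρ s : ℕ) :
    ((s : ℂ) + 1) * bcoef ρ (s + 1) = ((ρ : ℂ) + 1 / 2 + s) * bcoef ρ s := by
  rw [bcoef_eq, bcoef_eq, Finset.prod_range_succ]
  have hs : ((s : ℂ) + 1) ≠ 0 := Nat.cast_add_one_ne_zero s
  rw [div_eq_mul_inv]
  calc ((s : ℂ) + 1) * ((∏ j ∈ range s, (((ρ : ℂ) + 1 / 2 + (j : ℂ)) / ((j : ℂ) + 1))) *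
        (((ρ : ℂ) + 1 / 2 + (s : ℂ)) * ((s : ℂ) + 1)⁻¹))
      = (((ρ : ℂ) + 1 / 2 + (s : ℂ)) * ∏ j ∈ range s, (((ρ : ℂ) + 1 / 2 + (j : ℂ)) / ((j : ℂ) + 1)))
        * (((s : ℂ) + 1) * ((s : ℂ) + 1)⁻¹) := by ring
    _ = _ := by rw [mul_inv_cancel₀ hs, mul_one]; norm_num

end DualPS

namespace DualPS

noncomputable def Sc (ρ m : ℕ) : ℂ := ∑ j ∈ range (m + 1), bcoef ρ j * bcoef ρ (m - j)

lemma Sc_zero (ρ : ℕ) : Sc ρ 0 = 1 := by simp [Sc, bcoef_zero]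

lemma sym (ρ k : ℕ) :
    ∑ j ∈ range (k + 1), (j : ℂ) * (bcoef ρ j * bcoef ρ (k - j))
      = ∑ j ∈ range (k + 1), ((k : ℂ) - (j : ℂ)) * (bcoef ρ j * bcoef ρ (k - j)) := by
  rw [← Finset.sum_range_reflect (fun j => (j : ℂ) * (bcoef ρ j * bcoef ρ (k - j))) (k + 1)]
  refine Finset.sum_congr rfl fun j hj => ?_
  rw [Finset.mem_range] at hj
  have hjk : j ≤ k := by omega
  have h1 : k + 1 - 1 - j = k - j := by omega
  have h2 : k - (k - j) = j := by omega
  have h3 : ((k - j : ℕ) : ℂ) = (k : ℂ) - (j : ℂ) := by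
    push_cast [Nat.cast_sub hjk]; ring
  rw [h1, h2, h3]
  ring

lemma Sc_rec (ρ m : ℕ) :
    ((m : ℂ) + 1) * Sc ρ (m + 1) = (2 * (ρ : ℂ) + 1 + (m : ℂ)) * Sc ρ m := by
  have hA2 : 2 * (∑ k ∈ range (m + 1), (k : ℂ) * (bcoef ρ k * bcoef ρ (m - k)))
      = (m : ℂ) * Sc ρ m := by
    rw [two_mul]
    nth_rewrite 2 [sym ρ m]
    rw [← Finset.sum_add_distrib, Sc, Finset.mul_sum]
    exact Finset.sum_congr rfl fun j hj => by ring
  have hA : (∑ j ∈ range (m + 2), (j : ℂ) * (bcoef ρ j * bcoef ρ (m + 1 - j)))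
      = ((ρ : ℂ) + 1 / 2) * Sc ρ m + ∑ k ∈ range (m + 1), (k : ℂ) * (bcoef ρ k * bcoef ρ (m - k)) := by
    rw [Finset.sum_range_succ' (fun j => (j : ℂ) * (bcoef ρ j * bcoef ρ (m + 1 - j))) (m + 1)]
    have h0 : ((0 : ℕ) : ℂ) * (bcoef ρ 0 * bcoef ρ (m + 1 - 0)) = 0 := by simp
    rw [h0, add_zero]
    have hterm : ∀ k ∈ range (m + 1),
        ((k + 1 : ℕ) : ℂ) * (bcoef ρ (k + 1) * bcoef ρ (m + 1 - (k + 1)))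
          = ((ρ : ℂ) + 1 / 2 + (k : ℂ)) * (bcoef ρ k * bcoef ρ (m - k))
            := by
      intro k hk
      have hsub : m + 1 - (k + 1) = m - k := by omega
      have : ((k : ℂ) + 1) * bcoef ρ (k + 1) = ((ρ : ℂ) + 1 / 2 + (k : ℂ)) * bcoef ρ k := bcoef_rec ρ k
      rw [hsub]
      push_cast
      calc ((k : ℂ) + 1) * (bcoef ρ (k + 1) * bcoef ρ (m - k))
          = (((k : ℂ) + 1) * bcoef ρ (k + 1)) * bcoef ρ (m - k) := by ring
        _ = (((ρ : ℂ) + 1 / 2 + (k : ℂ)) * bcoef ρ k) * bcoef ρ (m - k) := by rw [this]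
        _ = _ := by ring
    rw [Finset.sum_congr rfl hterm, Sc, Finset.mul_sum, ← Finset.sum_add_distrib]
    exact Finset.sum_congr rfl fun j hj => by ring
  have step1 : ((m : ℂ) + 1) * Sc ρ (m + 1)
      = 2 * ∑ j ∈ range (m + 2), (j : ℂ) * (bcoef ρ j * bcoef ρ (m + 1 - j)) := by
    rw [Sc, Finset.mul_sum, two_mul]
    nth_rewrite 2 [sym ρ (m + 1)]
    rw [← Finset.sum_add_distrib]
    refine Finset.sum_congr rfl fun j hj => ?_
    push_cast
    ring
  rw [step1, hA, mul_add, hA2]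
  ring

lemma Sc_eq (ρ m : ℕ) : Sc ρ m = ((2 * ρ + m).choose m : ℂ) := by
  induction m with
  | zero => simp [Sc_zero]
  | succ m ih =>
    have hnat : (2 * ρ + m + 1) * ((2 * ρ + m).choose m)
        = ((2 * ρ + m + 1).choose (m + 1)) * (m + 1) :=
      Nat.add_one_mul_choose_eq (2 * ρ + m) m
    have hc : ((2 * ρ + m + 1 : ℕ) : ℂ) * (((2 * ρ + m).choose m : ℕ) : ℂ)
        = (((2 * ρ + m + 1).choose (m + 1) : ℕ) : ℂ) * ((m : ℂ) + 1) := by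
      exact_mod_cast congrArg (Nat.cast : ℕ → ℂ) hnat
    have h1 : ((m : ℂ) + 1) * Sc ρ (m + 1)
        = ((m : ℂ) + 1) * (((2 * ρ + (m + 1)).choose (m + 1) : ℕ) : ℂ) := by
      rw [Sc_rec, ih]
      have : (2 * (ρ : ℂ) + 1 + (m : ℂ)) = ((2 * ρ + m + 1 : ℕ) : ℂ) := by push_cast; ring
      rw [this, hc]
      have : 2 * ρ + (m + 1) = 2 * ρ + m + 1 := by omega
      rw [this]
      ring
    exact mul_left_cancel₀ (Nat.cast_add_one_ne_zero m) h1

end DualPS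

namespace DualPS

lemma mk_sq (ρ : ℕ) :
    (PowerSeries.mk (bcoef ρ)) ^ 2 = (PowerSeries.invOneSubPow ℂ (2 * ρ + 1)).val := by
  ext m
  rw [pow_two, PowerSeries.coeff_mul, Finset.Nat.sum_antidiagonal_eq_sum_range_succ_mk]
  simp only [PowerSeries.coeff_mk]
  have h1 : ∑ j ∈ range (m + 1), bcoef ρ j * bcoef ρ (m - j) = Sc ρ m := rfl
  rw [h1, Sc_eq]
  rw [PowerSeries.invOneSubPow_val_eq_mk_sub_one_add_choose_of_pos (S := ℂ) (d := 2 * ρ + 1) (by omega)]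
  rw [PowerSeries.coeff_mk]
  congr 1
  have h2 : 2 * ρ + 1 - 1 = 2 * ρ := by omega
  rw [h2]
  have h4 := Nat.choose_symm (show m ≤ 2 * ρ + m by omega)
  simpa using h4.symm

lemma one_sub_X_pow_mul_mk_sq (ρ : ℕ) :
    (1 - PowerSeries.X : PowerSeries ℂ) ^ (2 * ρ + 1) * (PowerSeries.mk (bcoef ρ)) ^ 2 = 1 := by
  rw [mk_sq, ← PowerSeries.invOneSubPow_inv_eq_one_sub_pow]
  exact (PowerSeries.invOneSubPow ℂ (2 * ρ + 1)).inv_val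

noncomputable def Pc (ρ n : ℕ) : Polynomial ℂ :=
  ∑ s ∈ range (n + 1), Polynomial.C (bcoef ρ s) * Polynomial.X ^ s

lemma Pc_coeff (ρ n d : ℕ) (hd : d ≤ n) : (Pc ρ n).coeff d = bcoef ρ d := by
  rw [Pc, Polynomial.finset_sum_coeff]
  simp only [Polynomial.coeff_C_mul, Polynomial.coeff_X_pow]
  rw [Finset.sum_eq_single d (fun b _ hb => by rw [if_neg (Ne.symm hb), mul_zero]) (fun h => absurd (Finset.mem_range.2 (by omega)) h)]
  simp

lemma coeff_mul_congr {φ₁ φ₂ ψ₁ ψ₂ : PowerSeries ℂ} {n : ℕ}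
    (hφ : ∀ e ≤ n, PowerSeries.coeff e φ₁ = PowerSeries.coeff e φ₂)
    (hψ : ∀ e ≤ n, PowerSeries.coeff e ψ₁ = PowerSeries.coeff e ψ₂)
    (d : ℕ) (hd : d ≤ n) :
    PowerSeries.coeff d (φ₁ * ψ₁) = PowerSeries.coeff d (φ₂ * ψ₂) := by
  rw [PowerSeries.coeff_mul, PowerSeries.coeff_mul]
  refine Finset.sum_congr rfl fun p hp => ?_
  rw [Finset.HasAntidiagonal.mem_antidiagonal] at hp
  rw [hφ p.1 (by omega), hψ p.2 (by omega)]

lemma dvd_key (ρ n : ℕ) :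
    (Polynomial.X : Polynomial ℂ) ^ (n + 1) ∣
      ((1 - Polynomial.X) ^ (2 * ρ + 1) * (Pc ρ n) ^ 2 - 1) := by
  rw [Polynomial.X_pow_dvd_iff]
  intro d hd
  have hdn : d ≤ n := by omega
  have hcoe : (((1 - Polynomial.X : Polynomial ℂ) ^ (2 * ρ + 1) * (Pc ρ n) ^ 2 - 1 : Polynomial ℂ) :
      PowerSeries ℂ)
      = (1 - PowerSeries.X) ^ (2 * ρ + 1) * ((Pc ρ n : PowerSeries ℂ)) ^ 2 - 1 := by
    push_cast
    rfl
  have hP : ∀ e ≤ n, PowerSeries.coeff e ((Pc ρ n : PowerSeries ℂ))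
      = PowerSeries.coeff e (PowerSeries.mk (bcoef ρ)) := by
    intro e he
    rw [Polynomial.coeff_coe, Pc_coeff ρ n e he, PowerSeries.coeff_mk]
  have hP2 : ∀ e ≤ n, PowerSeries.coeff e (((Pc ρ n : PowerSeries ℂ)) ^ 2)
      = PowerSeries.coeff e ((PowerSeries.mk (bcoef ρ)) ^ 2) := by
    intro e he
    rw [pow_two, pow_two]
    exact coeff_mul_congr hP hP e he
  have hmain : PowerSeries.coeff d
        ((1 - PowerSeries.X) ^ (2 * ρ + 1) * ((Pc ρ n : PowerSeries ℂ)) ^ 2)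
      = PowerSeries.coeff d (1 : PowerSeries ℂ) := by
    have h := coeff_mul_congr (φ₁ := (1 - PowerSeries.X : PowerSeries ℂ) ^ (2 * ρ + 1))
      (φ₂ := (1 - PowerSeries.X : PowerSeries ℂ) ^ (2 * ρ + 1)) (fun e _ => rfl) hP2 d hdn
    rwa [one_sub_X_pow_mul_mk_sq ρ] at h
  have : Polynomial.coeff ((1 - Polynomial.X : Polynomial ℂ) ^ (2 * ρ + 1) * (Pc ρ n) ^ 2 - 1) d
      = PowerSeries.coeff d (((1 - Polynomial.X : Polynomial ℂ) ^ (2 * ρ + 1) * (Pc ρ n) ^ 2 - 1 :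
          Polynomial ℂ) : PowerSeries ℂ) := (Polynomial.coeff_coe _ _).symm
  rw [this, hcoe, map_sub, hmain]
  simp

end DualPS

namespace DualPS

lemma analyticAt_deriv {f : ℂ → ℂ} {x : ℂ} (h : AnalyticAt ℂ f x) :
    AnalyticAt ℂ (deriv f) x := by
  have h1 : AnalyticAt ℂ (fderiv ℂ f) x := h.fderiv
  exact ((ContinuousLinearMap.apply ℂ ℂ (1 : ℂ)).analyticAt (fderiv ℂ f x)).comp h1

lemma iteratedDeriv_factor_zero :
    ∀ (s k : ℕ), s < k → ∀ (h G : ℂ → ℂ), AnalyticAt ℂ G 1 →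
      (h =ᶠ[𝓝 (1 : ℂ)] fun z => (z - 1) ^ k * G z) → iteratedDeriv s h 1 = 0 := by
  intro s
  induction s with
  | zero =>
    intro k hk h G hG hev
    rw [iteratedDeriv_zero]
    have h1 : h 1 = ((1 : ℂ) - 1) ^ k * G 1 := hev.eq_of_nhds
    rw [h1, sub_self, zero_pow (by omega), zero_mul]
  | succ s ih =>
    intro k hk h G hG hev
    obtain ⟨k', rfl⟩ : ∃ k', k = k' + 1 := ⟨k - 1, by omega⟩
    rw [iteratedDeriv_succ']
    refine ih k' (by omega) (deriv h) (fun z => ((k' : ℂ) + 1) * G z + (z - 1) * deriv G z)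
      ((analyticAt_const.mul hG).add
        ((analyticAt_id.sub analyticAt_const).mul (analyticAt_deriv hG))) ?_
    have h1 : deriv h =ᶠ[𝓝 (1 : ℂ)] deriv (fun z => (z - 1) ^ (k' + 1) * G z) := hev.deriv
    have h2 : ∀ᶠ y in 𝓝 (1 : ℂ), AnalyticAt ℂ G y := hG.eventually_analyticAt
    filter_upwards [h1, h2] with y hy hGy
    rw [hy]
    have hd : HasDerivAt (fun z : ℂ => (z - 1) ^ (k' + 1) * G z)
        (((((k' + 1 : ℕ)) : ℂ) * (y - 1) ^ (k' + 1 - 1) * 1) * G y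
          + (y - 1) ^ (k' + 1) * deriv G y) y :=
      (((hasDerivAt_id y).sub_const 1).pow (k' + 1)).mul hGy.differentiableAt.hasDerivAt
    rw [hd.deriv]
    simp only [Nat.add_sub_cancel]
    push_cast
    ring

lemma iteratedDeriv_add_analytic :
    ∀ (n : ℕ) (f g : ℂ → ℂ) (x : ℂ), AnalyticAt ℂ f x → AnalyticAt ℂ g x →
      iteratedDeriv n (fun z => f z + g z) x = iteratedDeriv n f x + iteratedDeriv n g x := by
  intro n
  induction n with
  | zero => intro f g x _ _; simp
  | succ n ih =>
    intro f g x hf hg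
    rw [iteratedDeriv_succ', iteratedDeriv_succ', iteratedDeriv_succ']
    have hev : deriv (fun z => f z + g z) =ᶠ[𝓝 x] fun z => deriv f z + deriv g z := by
      filter_upwards [hf.eventually_analyticAt, hg.eventually_analyticAt] with y hfy hgy
      exact deriv_add hfy.differentiableAt hgy.differentiableAt
    rw [hev.iteratedDeriv_eq n]
    exact ih (deriv f) (deriv g) x (analyticAt_deriv hf) (analyticAt_deriv hg)

lemma iteratedDeriv_two_cpow (c : ℂ) (s : ℕ) :
    Set.EqOn (iteratedDeriv s (fun z : ℂ => 2 * z ^ c))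
      (fun z => (2 * ∏ i ∈ range s, (c - (i : ℂ))) * z ^ (c - (s : ℂ)))
      {z : ℂ | 0 < z.re} := by
  induction s with
  | zero => intro z hz; simp [iteratedDeriv_zero]
  | succ s ih =>
    intro x hx
    have hopen : IsOpen {z : ℂ | 0 < z.re} := isOpen_lt continuous_const Complex.continuous_re
    rw [iteratedDeriv_succ]
    have hev : iteratedDeriv s (fun z : ℂ => 2 * z ^ c)
        =ᶠ[𝓝 x] fun z => (2 * ∏ i ∈ range s, (c - (i : ℂ))) * z ^ (c - (s : ℂ)) := by
      filter_upwards [hopen.mem_nhds hx] with y hy using ih hy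
    rw [hev.deriv_eq]
    have hd : HasDerivAt (fun z : ℂ => (2 * ∏ i ∈ range s, (c - (i : ℂ))) * z ^ (c - (s : ℂ)))
        ((2 * ∏ i ∈ range s, (c - (i : ℂ))) * ((c - (s : ℂ)) * x ^ (c - (s : ℂ) - 1))) x :=
      (Complex.hasStrictDerivAt_cpow_const (Or.inl hx)).hasDerivAt.const_mul _
    rw [hd.deriv]
    have he : c - (s : ℂ) - 1 = c - (((s + 1 : ℕ)) : ℂ) := by push_cast; ring
    rw [he, Finset.prod_range_succ]
    ring

end DualPS


/-- The product of the (shifted) odd-order-`N` B-spline symbol with the correction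
`c_M(z) = Σ_s binom(ρ-1/2+s,s) δ(z)^s` satisfies the polynomial reproduction conditions at
`1` with shift `p = -1/2` up to order `M-1`, and equals the dual pseudo-spline symbol
`((z+1)/z) σ(z)^ρ Σ_s binom(ρ-1/2+s,s) δ(z)^s`. -/
theorem dual_pseudoSpline_symbol (ρ : ℕ) (hρ : 1 ≤ ρ) (N : ℕ) (hN : N = 2 * ρ + 1)
    (M : ℕ) (hM1 : 1 ≤ M) (hMN : M ≤ N) (hModd : Odd M)
    (a : ℂ → ℂ)
    (ha : ∀ z : ℂ, a z =
      ((2 : ℂ) ^ (N - 1))⁻¹ * z ^ (-((ρ : ℤ) + 1)) * (z + 1) ^ N *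
        ∑ s ∈ range ((M - 1) / 2 + 1),
          (((s.factorial : ℕ) : ℂ))⁻¹ *
            (∏ i ∈ range s, ((ρ : ℂ) - 1 / 2 + (s : ℂ) - (i : ℂ))) *
            (-((1 - z) ^ 2 / (4 * z))) ^ s) :
    (∀ s : ℕ, s ≤ M - 1 → iteratedDeriv s a 1 =
        2 * ∏ i ∈ range s, (-(1 / 2 : ℂ) - (i : ℂ))) ∧
    (∀ z : ℂ, z ≠ 0 → a z =
      ((z + 1) / z) * ((1 + z) ^ 2 / (4 * z)) ^ ρ *
        ∑ s ∈ range ((M - 1) / 2 + 1),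
          (((s.factorial : ℕ) : ℂ))⁻¹ *
            (∏ i ∈ range s, ((ρ : ℂ) - 1 / 2 + (s : ℂ) - (i : ℂ))) *
            (-((1 - z) ^ 2 / (4 * z))) ^ s) := by
  subst hN
  obtain ⟨n, hn⟩ := hModd
  have hn2 : (M - 1) / 2 = n := by omega
  have hM2n : M - 1 = 2 * n := by omega
  -- zpow rewrite
  have hzp : ∀ z : ℂ, z ^ (-((ρ : ℤ) + 1)) = (z ^ (ρ + 1))⁻¹ := by
    intro z
    rw [show -((ρ : ℤ) + 1) = -(((ρ + 1 : ℕ)) : ℤ) by push_cast; ring, zpow_neg, zpow_natCast]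
  have h21 : (2 : ℂ) ^ (2 * ρ + 1 - 1) = 2 ^ (2 * ρ) := by norm_num
  -- the sum is a polynomial evaluation
  have hsum : ∀ z : ℂ,
      (∑ s ∈ range ((M - 1) / 2 + 1),
          (((s.factorial : ℕ) : ℂ))⁻¹ *
            (∏ i ∈ range s, ((ρ : ℂ) - 1 / 2 + (s : ℂ) - (i : ℂ))) *
            (-((1 - z) ^ 2 / (4 * z))) ^ s)
        = (DualPS.Pc ρ n).eval (-((1 - z) ^ 2 / (4 * z))) := by
    intro z
    rw [hn2, DualPS.Pc, Polynomial.eval_finset_sum]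
    refine Finset.sum_congr rfl fun s _ => ?_
    rw [Polynomial.eval_mul, Polynomial.eval_pow, Polynomial.eval_C, Polynomial.eval_X,
      DualPS.bcoef]
  have hpow4 : ∀ (u v : ℂ) (k : ℕ), (u ^ 2 / (4 * v)) ^ k = u ^ (2 * k) / (2 ^ (2 * k) * v ^ k) := by
    intro u v k
    rw [div_pow, mul_pow, show (4 : ℂ) = 2 ^ 2 by norm_num, ← pow_mul, ← pow_mul]
  have hafun : ∀ z : ℂ, a z = ((2 : ℂ) ^ (2 * ρ))⁻¹ * (z ^ (ρ + 1))⁻¹ * (z + 1) ^ (2 * ρ + 1) *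
      (DualPS.Pc ρ n).eval (-((1 - z) ^ 2 / (4 * z))) := by
    intro z
    rw [ha z, hsum z, hzp z, h21]
  constructor
  · -- derivative conditions
    obtain ⟨Q, hQ⟩ := DualPS.dvd_key ρ n
    have hQ' : ∀ w : ℂ, (1 - w) ^ (2 * ρ + 1) * ((DualPS.Pc ρ n).eval w) ^ 2
        = 1 + w ^ (n + 1) * Q.eval w := by
      intro w
      have h := congrArg (Polynomial.eval w) hQ
      simp only [Polynomial.eval_sub, Polynomial.eval_mul, Polynomial.eval_pow,
        Polynomial.eval_one, Polynomial.eval_X, Polynomial.eval_sub] at h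
      linear_combination h
    set gfun : ℂ → ℂ := fun z => ((-1 : ℂ)) ^ (n + 1) * 4 / ((4 * z) ^ (n + 1)) *
      Q.eval (-((1 - z) ^ 2 / (4 * z))) with hgfun
    have hza : ∀ z : ℂ, z ≠ 0 → z * (a z) ^ 2 = 4 + (z - 1) ^ (2 * n + 2) * gfun z := by
      intro z hz
      set w : ℂ := -((1 - z) ^ 2 / (4 * z)) with hw
      have hw1 : (1 : ℂ) - w = (z + 1) ^ 2 / (4 * z) := by
        rw [hw]
        field_simp
        ring
      have hB2 : z * (((2 : ℂ) ^ (2 * ρ))⁻¹ * (z ^ (ρ + 1))⁻¹ * (z + 1) ^ (2 * ρ + 1)) ^ 2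
          = 4 * ((1 : ℂ) - w) ^ (2 * ρ + 1) := by
        rw [hw1, hpow4 (z + 1) z (2 * ρ + 1)]
        field_simp
        ring
      have h4z : ((4 : ℂ) * z) ^ (n + 1) ≠ 0 := by
        apply pow_ne_zero
        simp [hz]
      have hwp : w ^ (n + 1) * (4 * z) ^ (n + 1) = (-1 : ℂ) ^ (n + 1) * (z - 1) ^ (2 * n + 2) := by
        rw [hw]
        have h1z : ((1 : ℂ) - z) ^ (2 * n + 2) = (z - 1) ^ (2 * n + 2) := by
          rw [show ((1 : ℂ) - z) = -(z - 1) by ring, Even.neg_pow ⟨n + 1, by ring⟩]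
        rw [neg_pow, div_pow, ← pow_mul]
        rw [show 2 * (n + 1) = 2 * n + 2 by ring, h1z]
        field_simp
      have hwp' : w ^ (n + 1) = (-1 : ℂ) ^ (n + 1) * (z - 1) ^ (2 * n + 2) / (4 * z) ^ (n + 1) := by
        rw [eq_div_iff h4z]
        linear_combination hwp
      calc z * (a z) ^ 2
          = (z * (((2 : ℂ) ^ (2 * ρ))⁻¹ * (z ^ (ρ + 1))⁻¹ * (z + 1) ^ (2 * ρ + 1)) ^ 2) *
            ((DualPS.Pc ρ n).eval w) ^ 2 := by rw [hafun z]; ring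
        _ = 4 * (((1 : ℂ) - w) ^ (2 * ρ + 1) * ((DualPS.Pc ρ n).eval w) ^ 2) := by
            rw [hB2]; ring
        _ = 4 + 4 * (w ^ (n + 1) * Q.eval w) := by rw [hQ' w]; ring
        _ = 4 + (z - 1) ^ (2 * n + 2) * gfun z := by
            simp only [hgfun]
            rw [← hw, hwp']
            ring
    -- the cpow comparison function
    set bf : ℂ → ℂ := fun z => 2 * z ^ (-(1 / 2 : ℂ)) with hbf
    have hzb : ∀ z : ℂ, z ≠ 0 → z * (bf z) ^ 2 = 4 := by
      intro z hz
      have h1 : z ^ (-(1 / 2 : ℂ)) * z ^ (-(1 / 2 : ℂ)) = z ^ ((-(1 / 2) + -(1 / 2)) : ℂ) :=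
        (Complex.cpow_add _ _ hz).symm
      have h2 : ((-(1 / 2) + -(1 / 2)) : ℂ) = -1 := by norm_num
      calc z * (2 * z ^ (-(1 / 2 : ℂ))) ^ 2
          = 4 * (z * (z ^ (-(1 / 2 : ℂ)) * z ^ (-(1 / 2 : ℂ)))) := by ring
        _ = 4 * (z * z⁻¹) := by rw [h1, h2, Complex.cpow_neg_one]
        _ = 4 := by rw [mul_inv_cancel₀ hz, mul_one]
    have hbf1 : bf 1 = 2 := by rw [hbf]; simp [Complex.one_cpow]
    have hinner : AnalyticAt ℂ (fun z : ℂ => -((1 - z) ^ 2 / (4 * z))) 1 := by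
      refine AnalyticAt.neg ?_
      refine AnalyticAt.div ?_ ?_ (by norm_num)
      · exact (analyticAt_const.sub analyticAt_id).pow 2
      · exact analyticAt_const.mul analyticAt_id
    have hpoly : ∀ q : Polynomial ℂ, AnalyticAt ℂ (fun z : ℂ => q.eval (-((1 - z) ^ 2 / (4 * z)))) 1 := by
      intro q
      have h : (fun z : ℂ => q.eval (-((1 - z) ^ 2 / (4 * z))))
          = fun z => ∑ i ∈ range (q.natDegree + 1), q.coeff i * (-((1 - z) ^ 2 / (4 * z))) ^ i :=
        funext fun z => by rw [Polynomial.eval_eq_sum_range]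
      rw [h]
      exact Finset.analyticAt_fun_sum _ fun i _ => analyticAt_const.mul (hinner.pow i)
    have haA : AnalyticAt ℂ a 1 := by
      have : AnalyticAt ℂ (fun z : ℂ => ((2 : ℂ) ^ (2 * ρ))⁻¹ * (z ^ (ρ + 1))⁻¹ *
          (z + 1) ^ (2 * ρ + 1) * (DualPS.Pc ρ n).eval (-((1 - z) ^ 2 / (4 * z)))) 1 := by
        refine AnalyticAt.mul (AnalyticAt.mul (AnalyticAt.mul analyticAt_const ?_) ?_) (hpoly _)
        · exact ((analyticAt_id.pow (ρ + 1)).inv (by norm_num))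
        · exact (analyticAt_id.add analyticAt_const).pow (2 * ρ + 1)
      exact this.congr (Filter.eventuallyEq_of_mem Filter.univ_mem fun z _ => (hafun z).symm)
    have hbA : AnalyticAt ℂ bf 1 := by
      rw [hbf]
      refine analyticAt_const.mul (analyticAt_id.cpow analyticAt_const ?_)
      exact Or.inl (by norm_num)
    have ha1 : a 1 = 2 := by
      rw [hafun 1]
      have hPc0 : (DualPS.Pc ρ n).eval (-(((1 : ℂ) - 1) ^ 2 / (4 * 1))) = 1 := by
        norm_num
        rw [← Polynomial.coeff_zero_eq_eval_zero, DualPS.Pc_coeff ρ n 0 (by omega),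
          DualPS.bcoef_zero]
      rw [hPc0]
      have h2p : (2 : ℂ) ^ (2 * ρ + 1) = 2 ^ (2 * ρ) * 2 := by rw [pow_succ]
      norm_num [h2p]
    have hgA : AnalyticAt ℂ gfun 1 := by
      rw [hgfun]
      refine AnalyticAt.mul ?_ (hpoly Q)
      refine AnalyticAt.div analyticAt_const ?_ (by norm_num)
      exact (analyticAt_const.mul analyticAt_id).pow (n + 1)
    set Gf : ℂ → ℂ := fun z => gfun z / (z * (a z + bf z)) with hGf
    have hden : (fun z : ℂ => z * (a z + bf z)) 1 ≠ 0 := by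
      simp only [ha1, hbf1]
      norm_num
    have hGA : AnalyticAt ℂ Gf 1 := by
      rw [hGf]
      exact hgA.div (analyticAt_id.mul (haA.add hbA)) hden
    have hevne : ∀ᶠ z in 𝓝 (1 : ℂ), z ≠ 0 ∧ z * (a z + bf z) ≠ 0 := by
      have h1 : ∀ᶠ z in 𝓝 (1 : ℂ), z ≠ 0 := eventually_ne_nhds one_ne_zero
      have h2 : ∀ᶠ z in 𝓝 (1 : ℂ), z * (a z + bf z) ≠ 0 := by
        have hc : ContinuousAt (fun z : ℂ => z * (a z + bf z)) 1 :=
          continuousAt_id.mul (haA.continuousAt.add hbA.continuousAt)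
        exact hc.eventually_ne hden
      exact h1.and h2
    have hev : (fun z => a z - bf z) =ᶠ[𝓝 (1 : ℂ)] fun z => (z - 1) ^ (2 * n + 2) * Gf z := by
      filter_upwards [hevne] with z hz
      obtain ⟨hz0, hzd⟩ := hz
      rw [hGf]
      rw [mul_div_assoc', eq_div_iff hzd]
      calc (a z - bf z) * (z * (a z + bf z)) = z * (a z) ^ 2 - z * (bf z) ^ 2 := by ring
        _ = (z - 1) ^ (2 * n + 2) * gfun z := by rw [hza z hz0, hzb z hz0]; ring
    intro s hs
    have hs2n : s ≤ 2 * n := by omega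
    have hsplit : a =ᶠ[𝓝 (1 : ℂ)] fun z => bf z + (z - 1) ^ (2 * n + 2) * Gf z := by
      filter_upwards [hev] with z hz
      rw [← hz]; ring
    rw [hsplit.iteratedDeriv_eq s]
    rw [DualPS.iteratedDeriv_add_analytic s bf (fun z => (z - 1) ^ (2 * n + 2) * Gf z) 1 hbA
      (((analyticAt_id.sub analyticAt_const).pow (2 * n + 2)).mul hGA)]
    rw [DualPS.iteratedDeriv_factor_zero s (2 * n + 2) (by omega) _ Gf hGA
      Filter.EventuallyEq.rfl, add_zero]
    have h1mem : (1 : ℂ) ∈ {z : ℂ | 0 < z.re} := by simp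
    rw [hbf]
    rw [DualPS.iteratedDeriv_two_cpow (-(1 / 2 : ℂ)) s h1mem]
    simp only [Complex.one_cpow, mul_one]
  · -- symbol form
    intro z hz
    rw [ha z]
    congr 1
    rw [hzp z, h21, hpow4 (1 + z) z ρ]
    field_simp
    ring
end

section
/- Fix an integer m ≥ 1, θ_1, …, θ_m each either a positive real number or θ_ℓ = iβ_ℓ with β_ℓ ∈ [0,π), and integers τ_1, …, τ_m ≥ 1; set N := 2(τ_1 + ⋯ + τ_m). For each integer k ≥ 0 define B̃^{(k)}(z) := z^{−N/2}·∏_{ℓ=1}^{m}[(e^{θ_ℓ/2^{k+1}}z + 1)(e^{−θ_ℓ/2^{k+1}}z + 1)]^{τ_ℓ}, define B̃_{N−2}^{(k)}(z) := z^{−(N−2)/2}·(e^{θ_1/2^{k+1}}z + 1)^{τ_1−1}(e^{−θ_1/2^{k+1}}z + 1)^{τ_1−1}·∏_{ℓ=2}^{m}[(e^{θ_ℓ/2^{k+1}}z + 1)(e^{−θ_ℓ/2^{k+1}}z + 1)]^{τ_ℓ} (i.e. B̃^{(k)} with one copy of the pair (θ_1, −θ_1) removed), set D_k := (e^{−θ_1/2^{k+1}}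 + e^{θ_1/2^{k+1}})·B̃_{N−2}^{(k)}(e^{θ_1/2^{k+1}}), and assume D_k ≠ 0 for every k. Then for every z ∈ ℂ∖{0} the normalized exponential B-spline symbols B^{(k)}(z) := D_k^{−1}·B̃^{(k)}(z) converge, as k → ∞, to the (shifted) order-N polynomial B-spline symbol B_N(z) = 2^{−(N−1)}·z^{−N/2}·(z+1)^N. -/
open Complex Finset Filter

lemma exp_div_two_pow_tendsto_one (c : ℂ) :
    Tendsto (fun k : ℕ => Complex.exp (c / 2 ^ (k + 1))) atTop (nhds 1) := by
  have h1 : Tendsto (fun k : ℕ => ((2 : ℂ)⁻¹) ^ (k + 1)) atTop (nhds 0) := by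
    have h := tendsto_pow_atTop_nhds_zero_of_norm_lt_one (x := (2 : ℂ)⁻¹)
      (by rw [norm_inv]; norm_num)
    exact h.comp (tendsto_add_atTop_nat 1)
  have h0 : Tendsto (fun k : ℕ => c / 2 ^ (k + 1)) atTop (nhds 0) := by
    have := h1.const_mul c
    simpa [div_eq_mul_inv, inv_pow] using this
  have := (Complex.continuous_exp.tendsto 0).comp h0
  simpa [Function.comp_def] using this

/-- The normalized exponential B-spline symbols `B^{(k)} = D_k⁻¹ · B̃^{(k)}` of even order
`N` converge pointwise, as the level `k → ∞`, to the (shifted) order-`N` polynomial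
B-spline symbol `B_N(z) = 2^{-(N-1)} z^{-N/2} (z+1)^N`. -/
theorem normalized_expBSpline_tendsto_polynomial_BSpline (m : ℕ)
    (θ : Fin (m + 1) → ℂ)
    (hθ : ∀ ℓ, (∃ t : ℝ, 0 < t ∧ θ ℓ = (t : ℂ)) ∨
               (∃ β : ℝ, 0 ≤ β ∧ β < Real.pi ∧ θ ℓ = (β : ℂ) * I))
    (τ : Fin (m + 1) → ℕ) (hτ : ∀ ℓ, 1 ≤ τ ℓ)
    (N : ℕ) (hN : N = 2 * ∑ ℓ, τ ℓ)
    (Bt : ℕ → ℂ → ℂ)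
    (hBt : ∀ (k : ℕ) (z : ℂ), Bt k z = z ^ (-((N / 2 : ℕ) : ℤ)) *
      ∏ ℓ, ((exp (θ ℓ / 2 ^ (k + 1)) * z + 1) * (exp (-θ ℓ / 2 ^ (k + 1)) * z + 1)) ^ τ ℓ)
    (Bt2 : ℕ → ℂ → ℂ)
    (hBt2 : ∀ (k : ℕ) (z : ℂ), Bt2 k z = z ^ (-(((N - 2) / 2 : ℕ) : ℤ)) *
      ((exp (θ 0 / 2 ^ (k + 1)) * z + 1) * (exp (-θ 0 / 2 ^ (k + 1)) * z + 1)) ^ (τ 0 - 1) *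
      ∏ ℓ ∈ Finset.univ.erase 0,
        ((exp (θ ℓ / 2 ^ (k + 1)) * z + 1) * (exp (-θ ℓ / 2 ^ (k + 1)) * z + 1)) ^ τ ℓ)
    (D : ℕ → ℂ)
    (hD : ∀ k, D k = (exp (-θ 0 / 2 ^ (k + 1)) + exp (θ 0 / 2 ^ (k + 1))) *
      Bt2 k (exp (θ 0 / 2 ^ (k + 1))))
    (hDne : ∀ k, D k ≠ 0) :
    ∀ z : ℂ, z ≠ 0 →
      Tendsto (fun k => (D k)⁻¹ * Bt k z) atTop
        (nhds (((2 : ℂ) ^ (N - 1))⁻¹ * z ^ (-((N / 2 : ℕ) : ℤ)) * (z + 1) ^ N)) := by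
  intro z hz
  have hexp := exp_div_two_pow_tendsto_one
  -- limit of Bt k z
  have hBtlim : Tendsto (fun k => Bt k z) atTop
      (nhds (z ^ (-((N / 2 : ℕ) : ℤ)) * (z + 1) ^ N)) := by
    simp only [hBt]
    have hprod : Tendsto (fun k => ∏ ℓ,
        ((exp (θ ℓ / 2 ^ (k + 1)) * z + 1) * (exp (-θ ℓ / 2 ^ (k + 1)) * z + 1)) ^ τ ℓ)
        atTop (nhds (∏ ℓ : Fin (m + 1), (((1 : ℂ) * z + 1) * ((1 : ℂ) * z + 1)) ^ τ ℓ)) := by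
      apply tendsto_finset_prod
      intro ℓ _
      exact ((((hexp (θ ℓ)).mul_const z).add_const 1).mul
        (((hexp (-θ ℓ)).mul_const z).add_const 1)).pow _
    have hval : (∏ ℓ : Fin (m + 1), (((1 : ℂ) * z + 1) * ((1 : ℂ) * z + 1)) ^ τ ℓ)
        = (z + 1) ^ N := by
      simp only [one_mul, ← sq, ← pow_mul]
      rw [Finset.prod_pow_eq_pow_sum, hN, Finset.mul_sum]
    rw [hval] at hprod
    exact hprod.const_mul _
  -- limit of D k
  have h2pow : Tendsto (fun k : ℕ => (exp (θ 0 / 2 ^ (k + 1))) ^ (-(((N - 2) / 2 : ℕ) : ℤ)))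
      atTop (nhds 1) := by
    have hc : ContinuousAt (fun x : ℂ => x ^ (-(((N - 2) / 2 : ℕ) : ℤ))) 1 :=
      continuousAt_zpow₀ _ _ (Or.inl one_ne_zero)
    simpa [Function.comp_def] using hc.tendsto.comp (hexp (θ 0))
  have hDlim : Tendsto D atTop (nhds ((2 : ℂ) ^ (N - 1))) := by
    have hfirst : Tendsto (fun k : ℕ => exp (-θ 0 / 2 ^ (k + 1)) + exp (θ 0 / 2 ^ (k + 1)))
        atTop (nhds ((1 : ℂ) + 1)) := (hexp (-θ 0)).add (hexp (θ 0))
    have hmid : Tendsto (fun k : ℕ =>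
        ((exp (θ 0 / 2 ^ (k + 1)) * exp (θ 0 / 2 ^ (k + 1)) + 1) *
         (exp (-θ 0 / 2 ^ (k + 1)) * exp (θ 0 / 2 ^ (k + 1)) + 1)) ^ (τ 0 - 1))
        atTop (nhds ((((1 : ℂ) * 1 + 1) * ((1 : ℂ) * 1 + 1)) ^ (τ 0 - 1))) :=
      ((((hexp (θ 0)).mul (hexp (θ 0))).add_const 1).mul
        (((hexp (-θ 0)).mul (hexp (θ 0))).add_const 1)).pow _
    have hprod : Tendsto (fun k : ℕ => ∏ ℓ ∈ Finset.univ.erase 0,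
        ((exp (θ ℓ / 2 ^ (k + 1)) * exp (θ 0 / 2 ^ (k + 1)) + 1) *
         (exp (-θ ℓ / 2 ^ (k + 1)) * exp (θ 0 / 2 ^ (k + 1)) + 1)) ^ τ ℓ)
        atTop (nhds (∏ ℓ ∈ Finset.univ.erase 0,
          (((1 : ℂ) * 1 + 1) * ((1 : ℂ) * 1 + 1)) ^ τ ℓ)) := by
      apply tendsto_finset_prod
      intro ℓ _
      exact ((((hexp (θ ℓ)).mul (hexp (θ 0))).add_const 1).mul
        (((hexp (-θ ℓ)).mul (hexp (θ 0))).add_const 1)).pow _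
    have hall := hfirst.mul ((h2pow.mul hmid).mul hprod)
    have hvalue : ((1 : ℂ) + 1) * ((1 * (((1 : ℂ) * 1 + 1) * ((1 : ℂ) * 1 + 1)) ^ (τ 0 - 1)) *
        (∏ ℓ ∈ Finset.univ.erase 0, (((1 : ℂ) * 1 + 1) * ((1 : ℂ) * 1 + 1)) ^ τ ℓ))
        = (2 : ℂ) ^ (N - 1) := by
      have hS : ∑ ℓ, τ ℓ = τ 0 + ∑ ℓ ∈ Finset.univ.erase 0, τ ℓ :=
        (Finset.add_sum_erase _ τ (Finset.mem_univ 0)).symm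
      have ht0 := hτ 0
      simp only [one_mul, Finset.prod_pow_eq_pow_sum]
      have hNe : N - 1 = 1 + (2 * (τ 0 - 1) + 2 * ∑ ℓ ∈ Finset.univ.erase 0, τ ℓ) := by
        omega
      rw [hNe, pow_add, pow_add, pow_mul, pow_mul, pow_one]
      norm_num
    rw [hvalue] at hall
    exact Tendsto.congr (fun k => by rw [hD k, hBt2 k]) hall
  have h2ne : ((2 : ℂ) ^ (N - 1)) ≠ 0 := pow_ne_zero _ two_ne_zero
  rw [mul_assoc]
  exact (hDlim.inv₀ h2ne).mul hBtlim
end
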